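/- arXiv:1103.5305 — 6 statements merged into one kernel-verified Lean document; each statement's English description precedes it below -/
import Mathlib

section
/- Let θ : ℝ → ℝ be smooth, let R ∈ (0,∞), and assume Hypothesis (H_R) holds. Then for every x ∈ ℝ, θ(x) ≥ −π²/(4R²). -/
noncomputable section

/-- `g_R(t) = -(R/π)·log(1 - (π/R)·t)`. -/
def gR (R t : ℝ) : ℝ := -(R / Real.pi) * Real.log (1 - (Real.pi / R) * t)

/-- `f` is a (smooth) solution of `f'' + θ·f = 0`. -/
def IsSolution (θ f : ℝ → ℝ) : Prop :=
  ContDiff ℝ (⊤ : ℕ∞) f ∧ ∀ t, deriv (deriv f) t + θ t * f t = 0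

/-- `f₁, f₂` is the fundamental pair of solutions of `f'' + θ·f = 0` at `x`:
`f₁(x) = f₂'(x) = 1`, `f₂(x) = f₁'(x) = 0`. -/
def IsFundPair (θ : ℝ → ℝ) (x : ℝ) (f₁ f₂ : ℝ → ℝ) : Prop :=
  IsSolution θ f₁ ∧ IsSolution θ f₂ ∧
  f₁ x = 1 ∧ deriv f₁ x = 0 ∧ f₂ x = 0 ∧ deriv f₂ x = 1

/-- The `n`-th `g_R`-Schwarzian `𝒮_n^{θ,g_R}(x)`, computed from the fundamental pair
`f₁, f₂` at `x`: the `n`-th derivative at `t = 0` of `t ↦ h_x(x + g_R(t))`,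
where `h_x = f₂/f₁`. -/
def SchR (R x : ℝ) (f₁ f₂ : ℝ → ℝ) (n : ℕ) : ℝ :=
  iteratedDeriv n (fun t => f₂ (x + gR R t) / f₁ (x + gR R t)) 0

/-- The determinant `𝒟_n^{θ,g_R}(x)` of the `n×n` Hankel matrix with `(i,j)` entry
`𝒮_{i+j-1}^{θ,g_R}(x)/(i+j-1)!`. -/
def DetR (R x : ℝ) (f₁ f₂ : ℝ → ℝ) (n : ℕ) : ℝ :=
  (Matrix.of fun i j : Fin n =>
    SchR R x f₁ f₂ (i.1 + j.1 + 1) / (Nat.factorial (i.1 + j.1 + 1) : ℝ)).det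

/-- Hypothesis (H_R): `f₁, f₂` are linearly independent solutions of `f'' + θ·f = 0`
(constant Wronskian `W = f₁f₂' - f₁'f₂ ≠ 0`) and `h = f₂/f₁` admits a meromorphic
extension `H` to the strip `{|Im z| < R}` (holomorphic off the real zeros of `f₁`,
with poles at those zeros) which satisfies `W·Im H(z)·Im z > 0` for `0 < Im z < R`. -/
def HypR (θ : ℝ → ℝ) (R : ℝ) : Prop :=
  ∃ (f₁ f₂ : ℝ → ℝ) (H : ℂ → ℂ),
    IsSolution θ f₁ ∧ IsSolution θ f₂ ∧
    f₁ 0 * deriv f₂ 0 - deriv f₁ 0 * f₂ 0 ≠ 0 ∧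
    (∀ t : ℝ, f₁ t ≠ 0 → H t = ((f₂ t / f₁ t : ℝ) : ℂ)) ∧
    DifferentiableOn ℂ H
      {z : ℂ | |z.im| < R ∧ ∀ t : ℝ, f₁ t = 0 → z ≠ (t : ℂ)} ∧
    (∀ t : ℝ, f₁ t = 0 →
      Filter.Tendsto (fun z => ‖H z‖) (nhdsWithin (t : ℂ) {(t : ℂ)}ᶜ) Filter.atTop) ∧
    (∀ z : ℂ, 0 < z.im → z.im < R →
      0 < (f₁ 0 * deriv f₂ 0 - deriv f₁ 0 * f₂ 0) * (H z).im * z.im)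

/-- `(i,j)` entry (1-based, clamped to ℕ) of the matrix `T(f,n)(t)`:
`f^{(j-i)}(t)/(j-i)!` if `i ≤ j`, and `0` otherwise. -/
def Tentry (f : ℝ → ℝ) (t : ℝ) (i j : ℕ) : ℝ :=
  if i ≤ j then iteratedDeriv (j - i) f t / (Nat.factorial (j - i) : ℝ) else 0

end

/-! ### Auxiliary lemmas for the proof of `stmt6` -/

noncomputable section Aux

open Complex Metric Set

lemma im_div_helper (p d : ℂ) : (p / d).im = ((p * (starRingEnd ℂ) d).im) / Complex.normSq d := by
  rcases eq_or_ne d 0 with rfl|hd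
  · simp
  · rw [div_eq_mul_inv, Complex.inv_def, ← mul_assoc, Complex.mul_im, Complex.ofReal_im,
      Complex.ofReal_re, mul_zero, zero_add, div_eq_mul_inv]

/-- Schwarz–Pick inequality for a holomorphic map from the strip `{0 < im < R}`
to the upper half-plane. -/
lemma sp_strip {G : ℂ → ℂ} {R : ℝ} (hR : 0 < R)
    (hd : DifferentiableOn ℂ G {z : ℂ | 0 < z.im ∧ z.im < R})
    (hm : ∀ z : ℂ, 0 < z.im → z.im < R → 0 < (G z).im)
    {z : ℂ} (h1 : 0 < z.im) (h2 : z.im < R) :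
    ‖deriv G z‖ * (R / Real.pi * Real.sin (Real.pi / R * z.im)) ≤ (G z).im := by
  have hπ : (0:ℝ) < Real.pi := Real.pi_pos
  have hstrip_open : IsOpen {w : ℂ | 0 < w.im ∧ w.im < R} := by
    have : {w : ℂ | 0 < w.im ∧ w.im < R} = Complex.im ⁻¹' (Set.Ioo 0 R) := by
      ext w; simp [Set.mem_Ioo]
    rw [this]; exact isOpen_Ioo.preimage Complex.continuous_im
  set ζ : ℂ := Complex.exp (((Real.pi / R : ℝ) : ℂ) * z) with hζ
  have him_arg : (((Real.pi / R : ℝ) : ℂ) * z).im = Real.pi / R * z.im := by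
    simp [Complex.mul_im]
  have hsin : 0 < Real.sin (Real.pi / R * z.im) := by
    apply Real.sin_pos_of_pos_of_lt_pi
    · positivity
    · calc Real.pi / R * z.im < Real.pi / R * R := by
            apply mul_lt_mul_of_pos_left h2 (by positivity)
          _ = Real.pi := by field_simp
  have hζim : 0 < ζ.im := by
    rw [hζ, Complex.exp_im, him_arg]
    exact mul_pos (Real.exp_pos _) hsin
  set ω : ℂ := G z with hω
  have hωim : 0 < ω.im := hm z h1 h2
  set C : ℂ → ℂ := fun w => (ζ - (starRingEnd ℂ) ζ * w) / (1 - w) with hC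
  set D : ℂ → ℂ := fun w => ((R / Real.pi : ℝ) : ℂ) * Complex.log (C w) with hD
  set T : ℂ → ℂ := fun v => (v - ω) / (v - (starRingEnd ℂ) ω) with hT
  -- basic facts about C
  have hball : ∀ w : ℂ, w ∈ ball (0:ℂ) 1 → Complex.normSq w < 1 ∧ (1:ℂ) - w ≠ 0 := by
    intro w hw
    have habs : ‖w‖ < 1 := by rwa [← mem_ball_zero_iff]
    have hns : Complex.normSq w < 1 := by
      rw [Complex.normSq_eq_norm_sq]; nlinarith [norm_nonneg w]
    refine ⟨hns, fun h => ?_⟩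
    have : w = 1 := by linear_combination -h
    rw [this] at habs; simp at habs
  have hCim : ∀ w ∈ ball (0:ℂ) 1, 0 < (C w).im := by
    intro w hw
    obtain ⟨hns, hne⟩ := hball w hw
    have hden : 0 < Complex.normSq (1 - w) := by
      rw [Complex.normSq_pos]; exact hne
    rw [hC]
    simp only
    rw [im_div_helper]
    have hnum : ((ζ - (starRingEnd ℂ) ζ * w) * (starRingEnd ℂ) (1 - w)).im
        = ζ.im * (1 - Complex.normSq w) := by
      simp [Complex.mul_im, Complex.sub_im, Complex.sub_re, Complex.normSq_apply]
      ring
    rw [hnum]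
    exact div_pos (mul_pos hζim (by linarith)) hden
  have hCne : ∀ w ∈ ball (0:ℂ) 1, C w ∈ Complex.slitPlane := by
    intro w hw
    exact Complex.mem_slitPlane_iff.mpr (Or.inr (ne_of_gt (hCim w hw)))
  have hDmem : ∀ w ∈ ball (0:ℂ) 1, 0 < (D w).im ∧ (D w).im < R := by
    intro w hw
    have harg := (hCim w hw)
    have h0 : 0 < (Complex.log (C w)).im := by
      rw [Complex.log_im]
      rcases lt_or_eq_of_le (Complex.arg_nonneg_iff.mpr harg.le) with h|h
      · exact h
      · exfalso
        have := Complex.arg_eq_zero_iff.mp h.symm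
        exact absurd this.2 (ne_of_gt harg)
    have h1' : (Complex.log (C w)).im < Real.pi := by
      rw [Complex.log_im]
      exact Complex.arg_lt_pi_iff.mpr (Or.inr (ne_of_gt harg))
    have him : (D w).im = (R / Real.pi) * (Complex.log (C w)).im := by
      rw [hD]; simp [Complex.mul_im]
    constructor
    · rw [him]; positivity
    · rw [him]
      calc R / Real.pi * (Complex.log (C w)).im < R / Real.pi * Real.pi := by
            apply mul_lt_mul_of_pos_left h1' (by positivity)
        _ = R := by field_simp
  -- D 0 = z
  have hlt : Real.pi / R * z.im < Real.pi := by
    calc Real.pi / R * z.im < Real.pi / R * R := by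
          apply mul_lt_mul_of_pos_left h2 (by positivity)
      _ = Real.pi := by field_simp
  have hC0 : C 0 = ζ := by rw [hC]; simp
  have hD0 : D 0 = z := by
    rw [hD]
    simp only [hC0, hζ]
    rw [Complex.log_exp (by rw [him_arg]; nlinarith [mul_pos (div_pos hπ hR) h1])
      (by rw [him_arg]; linarith), ← mul_assoc, ← Complex.ofReal_mul]
    rw [show R / Real.pi * (Real.pi / R) = 1 by field_simp]
    simp
  -- T maps the upper half plane into the unit ball
  have hTne : ∀ v : ℂ, 0 < v.im → v - (starRingEnd ℂ) ω ≠ 0 := by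
    intro v hv h
    have : (v - (starRingEnd ℂ) ω).im = v.im + ω.im := by
      simp [Complex.sub_im, Complex.conj_im]
    rw [h] at this
    simp at this
    linarith
  have hTmaps : ∀ v : ℂ, 0 < v.im → T v ∈ ball (0:ℂ) 1 := by
    intro v hv
    have hne := hTne v hv
    have hlt2 : Complex.normSq (v - ω) < Complex.normSq (v - (starRingEnd ℂ) ω) := by
      simp only [Complex.normSq_apply, Complex.sub_re, Complex.sub_im, Complex.conj_re,
        Complex.conj_im]
      nlinarith [mul_pos hv hωim]
    rw [mem_ball_zero_iff, hT]
    simp only [norm_div]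
    rw [div_lt_one (by simpa [norm_pos_iff] using hne : (0:ℝ) < ‖v - (starRingEnd ℂ) ω‖)]
    rw [Complex.norm_def, Complex.norm_def]
    exact Real.sqrt_lt_sqrt (Complex.normSq_nonneg _) hlt2
  -- differentiability of F on the ball
  set F : ℂ → ℂ := fun w => T (G (D w)) with hF
  have hCdiff : ∀ w ∈ ball (0:ℂ) 1, DifferentiableAt ℂ C w := by
    intro w hw
    obtain ⟨_, hne⟩ := hball w hw
    exact ((differentiableAt_const ζ).sub ((differentiableAt_const _).mul differentiableAt_id)).div
      ((differentiableAt_const 1).sub differentiableAt_id) hne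
  have hDdiff : ∀ w ∈ ball (0:ℂ) 1, DifferentiableAt ℂ D w := by
    intro w hw
    exact ((Complex.differentiableAt_log (hCne w hw)).comp w (hCdiff w hw)).const_mul _
  have hGDdiff : ∀ w ∈ ball (0:ℂ) 1, DifferentiableAt ℂ G (D w) := by
    intro w hw
    exact hd.differentiableAt (hstrip_open.mem_nhds ⟨(hDmem w hw).1, (hDmem w hw).2⟩)
  have hTdiff : ∀ v : ℂ, 0 < v.im → DifferentiableAt ℂ T v := by
    intro v hv
    exact (differentiableAt_id.sub (differentiableAt_const _)).div
      (differentiableAt_id.sub (differentiableAt_const _)) (hTne v hv)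
  have hFdiff : DifferentiableOn ℂ F (ball (0:ℂ) 1) := by
    intro w hw
    have h1' := (hDmem w hw).1
    have h2' := (hDmem w hw).2
    exact (((hTdiff _ (hm _ h1' h2')).comp _ (hGDdiff w hw)).comp w (hDdiff w hw)).differentiableWithinAt
  have hF0 : F 0 = 0 := by
    rw [hF]; simp only [hD0, ← hω, hT]
    simp
  have hFmaps : Set.MapsTo F (ball (0:ℂ) 1) (ball (F 0) 1) := by
    intro w hw
    rw [hF0]
    exact hTmaps _ (hm _ (hDmem w hw).1 (hDmem w hw).2)
  have habsF : ‖deriv F 0‖ ≤ 1 := by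
    have := Complex.norm_deriv_le_div_of_mapsTo_ball hFdiff (hFmaps.mono_right ball_subset_closedBall) one_pos
    simpa using this
  -- derivative computation
  have hωne : ω - (starRingEnd ℂ) ω ≠ 0 := by
    intro h
    have : (ω - (starRingEnd ℂ) ω).im = 2 * ω.im := by
      simp [Complex.sub_im, Complex.conj_im]; ring
    rw [h] at this; simp at this; linarith
  have hζne : ζ ≠ 0 := Complex.exp_ne_zero _
  have hCd : HasDerivAt C (ζ - (starRingEnd ℂ) ζ) 0 := by
    have hnum : HasDerivAt (fun w : ℂ => ζ - (starRingEnd ℂ) ζ * w) (-(starRingEnd ℂ) ζ) 0 := by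
      simpa using ((hasDerivAt_id (0:ℂ)).const_mul ((starRingEnd ℂ) ζ)).const_sub ζ
    have hden : HasDerivAt (fun w : ℂ => (1:ℂ) - w) (-1) 0 := by
      simpa using (hasDerivAt_id (0:ℂ)).const_sub (1:ℂ)
    have := hnum.div hden (by norm_num)
    refine this.congr_deriv ?_; symm
    field_simp
    ring
  have hlogd : HasDerivAt (fun w => Complex.log (C w)) ((ζ - (starRingEnd ℂ) ζ)/ζ) 0 := by
    have := hCd.clog (by rw [hC0]; exact Complex.mem_slitPlane_iff.mpr (Or.inr (ne_of_gt hζim)))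
    rwa [hC0] at this
  have hDd : HasDerivAt D (((R / Real.pi : ℝ) : ℂ) * ((ζ - (starRingEnd ℂ) ζ)/ζ)) 0 :=
    hlogd.const_mul _
  have hGd : HasDerivAt G (deriv G z) z :=
    (hd.differentiableAt (hstrip_open.mem_nhds ⟨h1, h2⟩)).hasDerivAt
  have hTd : HasDerivAt T ((ω - (starRingEnd ℂ) ω)⁻¹) ω := by
    have hnum : HasDerivAt (fun v : ℂ => v - ω) 1 ω := (hasDerivAt_id ω).sub_const ω
    have hden : HasDerivAt (fun v : ℂ => v - (starRingEnd ℂ) ω) 1 ω :=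
      (hasDerivAt_id ω).sub_const _
    have := hnum.div hden hωne
    refine this.congr_deriv ?_; symm
    rw [one_mul, sub_self, zero_mul, sub_zero, sq, div_mul_eq_div_div, div_self hωne]
    rw [one_div]
  have hGDd : HasDerivAt (fun w => G (D w))
      (deriv G z * (((R / Real.pi : ℝ) : ℂ) * ((ζ - (starRingEnd ℂ) ζ)/ζ))) 0 := by
    apply HasDerivAt.comp
    · rw [hD0]; exact hGd
    · exact hDd
  have hFd : HasDerivAt F ((ω - (starRingEnd ℂ) ω)⁻¹ *
      (deriv G z * (((R / Real.pi : ℝ) : ℂ) * ((ζ - (starRingEnd ℂ) ζ)/ζ)))) 0 := by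
    have hTd' : HasDerivAt T ((ω - (starRingEnd ℂ) ω)⁻¹) ((fun w => G (D w)) 0) := by
      simp only [hD0]; exact hTd
    have hcomp := hTd'.comp 0 hGDd
    rw [hF]
    exact hcomp
  have hderivF : deriv F 0 = (ω - (starRingEnd ℂ) ω)⁻¹ *
      (deriv G z * (((R / Real.pi : ℝ) : ℂ) * ((ζ - (starRingEnd ℂ) ζ)/ζ))) := hFd.deriv
  -- absolute values
  have habs_sub_conj : ∀ v : ℂ, 0 < v.im → ‖v - (starRingEnd ℂ) v‖ = 2 * v.im := by
    intro v hv
    rw [Complex.sub_conj]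
    rw [norm_mul]
    simp [Complex.norm_real, abs_of_pos hv]
  have habsζ : ‖ζ‖ = Real.exp (Real.pi / R * z.re) := by
    rw [hζ, Complex.norm_exp]
    congr 1
    simp [Complex.mul_re]
  have hζim_val : ζ.im = Real.exp (Real.pi / R * z.re) * Real.sin (Real.pi / R * z.im) := by
    rw [hζ, Complex.exp_im, him_arg]
    congr 2
    simp [Complex.mul_re]
  have key : ‖deriv F 0‖
      = ‖deriv G z‖ * (R / Real.pi * Real.sin (Real.pi / R * z.im)) / ω.im := by
    rw [hderivF]
    rw [norm_mul, norm_inv, norm_mul, norm_mul, norm_div]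
    rw [habs_sub_conj ω hωim, habs_sub_conj ζ hζim, habsζ, hζim_val]
    rw [Complex.norm_real, Real.norm_eq_abs]
    rw [abs_of_pos (by positivity : (0:ℝ) < R / Real.pi)]
    have hexp : (0:ℝ) < Real.exp (Real.pi / R * z.re) := Real.exp_pos _
    field_simp
  rw [key] at habsF
  rw [div_le_one hωim] at habsF
  exact habsF


lemma IsSolution.diff {θ f : ℝ → ℝ} (h : IsSolution θ f) : Differentiable ℝ f :=
  h.1.differentiable (by norm_num)

lemma IsSolution.diff' {θ f : ℝ → ℝ} (h : IsSolution θ f) : Differentiable ℝ (deriv f) :=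
  ((contDiff_infty_iff_deriv.mp h.1).2).differentiable (by norm_num)

lemma IsSolution.dd {θ f : ℝ → ℝ} (h : IsSolution θ f) (t : ℝ) :
    deriv (deriv f) t = -(θ t * f t) := by
  have := h.2 t; linarith

lemma IsSolution.combo {θ f g : ℝ → ℝ} (hf : IsSolution θ f) (hg : IsSolution θ g) (a b : ℝ) :
    IsSolution θ (fun t => a * f t - b * g t) := by
  constructor
  · exact ContDiff.sub (hf.1.const_smul a) (hg.1.const_smul b)
  · intro t
    have hd : ∀ r, HasDerivAt (fun t => a * f t - b * g t)
        (a * deriv f r - b * deriv g r) r := fun r =>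
      (((hf.diff r).hasDerivAt).const_mul a).sub (((hg.diff r).hasDerivAt).const_mul b)
    have hder : deriv (fun t => a * f t - b * g t) = fun r => a * deriv f r - b * deriv g r :=
      funext fun r => (hd r).deriv
    rw [hder]
    have hd2 : HasDerivAt (fun r => a * deriv f r - b * deriv g r)
        (a * deriv (deriv f) t - b * deriv (deriv g) t) t :=
      (((hf.diff' t).hasDerivAt).const_mul a).sub (((hg.diff' t).hasDerivAt).const_mul b)
    rw [hd2.deriv, hf.dd, hg.dd]
    ring

lemma combo_deriv {θ f g : ℝ → ℝ} (hf : IsSolution θ f) (hg : IsSolution θ g) (a b : ℝ) :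
    deriv (fun t => a * f t - b * g t) = fun r => a * deriv f r - b * deriv g r :=
  funext fun r => ((((hf.diff r).hasDerivAt).const_mul a).sub
    (((hg.diff r).hasDerivAt).const_mul b)).deriv

lemma wronskian_const {θ u v : ℝ → ℝ} (hu : IsSolution θ u) (hv : IsSolution θ v) (s t : ℝ) :
    u s * deriv v s - deriv u s * v s = u t * deriv v t - deriv u t * v t := by
  set w : ℝ → ℝ := fun t => u t * deriv v t - deriv u t * v t with hw
  have hder : ∀ r, HasDerivAt w (u r * deriv (deriv v) r - deriv (deriv u) r * v r) r := by
    intro r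
    have h1 : HasDerivAt (fun t => u t * deriv v t)
        (deriv u r * deriv v r + u r * deriv (deriv v) r) r :=
      ((hu.diff r).hasDerivAt).mul ((hv.diff' r).hasDerivAt)
    have h2 : HasDerivAt (fun t => deriv u t * v t)
        (deriv (deriv u) r * v r + deriv u r * deriv v r) r :=
      ((hu.diff' r).hasDerivAt).mul ((hv.diff r).hasDerivAt)
    have := h1.sub h2
    refine this.congr_deriv ?_; symm
    ring
  have hzero : ∀ r, deriv w r = 0 := by
    intro r
    rw [(hder r).deriv, hu.dd, hv.dd]
    ring
  exact is_const_of_deriv_eq_zero (fun r => (hder r).differentiableAt) hzero s t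


lemma deriv_cast_of_real {Φ : ℂ → ℂ} {g : ℝ → ℝ} {a b t : ℝ}
    (hd : ∀ s ∈ Set.Ioo a b, DifferentiableAt ℂ Φ (s : ℂ))
    (heq : ∀ s ∈ Set.Ioo a b, Φ (s : ℂ) = ((g s : ℝ) : ℂ))
    (ht : t ∈ Set.Ioo a b) : deriv Φ (t : ℂ) = ((deriv g t : ℝ) : ℂ) := by
  have hIoo : Set.Ioo a b ∈ nhds t := Ioo_mem_nhds ht.1 ht.2
  have hF : HasDerivAt (fun s : ℝ => Φ (s : ℂ)) (deriv Φ (t : ℂ)) t :=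
    ((hd t ht).hasDerivAt).comp_ofReal
  have hF' : HasDerivAt (fun s : ℝ => ((g s : ℝ) : ℂ)) (deriv Φ (t : ℂ)) t := by
    apply hF.congr_of_eventuallyEq
    exact Filter.eventuallyEq_of_mem hIoo (fun s hs => (heq s hs).symm)
  have hre : HasDerivAt g ((deriv Φ (t : ℂ)).re) t := by
    have := Complex.reCLM.hasFDerivAt.comp_hasDerivAt t hF'
    simpa [Function.comp_def] using this
  have him : HasDerivAt (fun _ : ℝ => (0 : ℝ)) ((deriv Φ (t : ℂ)).im) t := by
    have := Complex.imCLM.hasFDerivAt.comp_hasDerivAt t hF'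
    simpa [Function.comp_def] using this
  have him0 : (deriv Φ (t : ℂ)).im = 0 := by
    have := him.unique (hasDerivAt_const t 0)
    linarith [this]
  apply Complex.ext
  · rw [Complex.ofReal_re, ← hre.deriv]
  · rw [Complex.ofReal_im, him0]

set_option maxHeartbeats 1000000 in
lemma main_bound {θ : ℝ → ℝ} {R : ℝ} (hR : 0 < R) {f₁ f₂ : ℝ → ℝ} {H : ℂ → ℂ} {W : ℝ}
    (hs₁ : IsSolution θ f₁) (hs₂ : IsSolution θ f₂)
    (hW0 : W ≠ 0)
    (hWconst : ∀ t, f₁ t * deriv f₂ t - deriv f₁ t * f₂ t = W)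
    (hHre : ∀ t : ℝ, f₁ t ≠ 0 → H t = ((f₂ t / f₁ t : ℝ) : ℂ))
    (hHdiff : DifferentiableOn ℂ H {z : ℂ | |z.im| < R ∧ ∀ t : ℝ, f₁ t = 0 → z ≠ (t : ℂ)})
    (hpick : ∀ z : ℂ, 0 < z.im → z.im < R → 0 < W * (H z).im * z.im)
    {x : ℝ} (hx : f₁ x ≠ 0) : -(Real.pi ^ 2 / (4 * R ^ 2)) ≤ θ x := by
  have hπ : (0:ℝ) < Real.pi := Real.pi_pos
  set a : ℝ := f₁ x with ha
  set b : ℝ := f₂ x with hb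
  set a' : ℝ := deriv f₁ x with ha'
  set b' : ℝ := deriv f₂ x with hb'
  set u₀ : ℝ → ℝ := fun t => b' * f₁ t - a' * f₂ t with hu₀
  set v₀ : ℝ → ℝ := fun t => a * f₂ t - b * f₁ t with hv₀
  have hu₀sol : IsSolution θ u₀ := IsSolution.combo hs₁ hs₂ b' a'
  have hv₀sol : IsSolution θ v₀ := IsSolution.combo hs₂ hs₁ a b
  have hu₀x : u₀ x = W := by have := hWconst x; rw [hu₀]; dsimp only; linarith
  have hu₀d : deriv u₀ = fun r => b' * deriv f₁ r - a' * deriv f₂ r :=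
    combo_deriv hs₁ hs₂ b' a'
  have hv₀d : deriv v₀ = fun r => a * deriv f₂ r - b * deriv f₁ r :=
    combo_deriv hs₂ hs₁ a b
  have hu₀'x : deriv u₀ x = 0 := by rw [hu₀d]; dsimp only; ring
  have hv₀x : v₀ x = 0 := by rw [hv₀]; dsimp only; ring
  have hv₀'x : deriv v₀ x = W := by
    have := hWconst x; rw [hv₀d]; dsimp only; linarith
  have hu₀''x : deriv (deriv u₀) x = -(θ x * W) := by rw [hu₀sol.dd, hu₀x]
  have huv : ∀ t, u₀ t * deriv v₀ t - deriv u₀ t * v₀ t = W ^ 2 := by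
    intro t
    rw [wronskian_const hu₀sol hv₀sol t x, hu₀x, hu₀'x, hv₀'x, hv₀x]
    ring
  -- the domain Ω of H
  set Ω : Set ℂ := {z : ℂ | |z.im| < R ∧ ∀ t : ℝ, f₁ t = 0 → z ≠ (t : ℂ)} with hΩ
  have hΩopen : IsOpen Ω := by
    have hzclosed : IsClosed {t : ℝ | f₁ t = 0} := isClosed_eq hs₁.1.continuous continuous_const
    have himg : IsClosed ((fun t : ℝ => (t : ℂ)) '' {t : ℝ | f₁ t = 0}) :=
      Complex.isometry_ofReal.isClosedEmbedding.isClosedMap _ hzclosed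
    have hΩeq : Ω = (fun z : ℂ => |z.im|) ⁻¹' Set.Iio R ∩
        ((fun t : ℝ => (t : ℂ)) '' {t : ℝ | f₁ t = 0})ᶜ := by
      ext z
      simp only [hΩ, Set.mem_setOf_eq, Set.mem_inter_iff, Set.mem_compl_iff, Set.mem_image,
        Set.mem_preimage, Set.mem_Iio]
      constructor
      · rintro ⟨h1, h2⟩
        refine ⟨h1, fun hc => ?_⟩
        obtain ⟨t, ht, hz⟩ := hc
        exact h2 t ht hz.symm
      · rintro ⟨h1, h2⟩
        exact ⟨h1, fun t ht hz => h2 ⟨t, ht, hz.symm⟩⟩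
    rw [hΩeq]
    exact (isOpen_Iio.preimage (_root_.continuous_abs.comp Complex.continuous_im)).inter
      himg.isOpen_compl
  have hxΩ : (x : ℂ) ∈ Ω := by
    refine ⟨by simpa using hR, fun t ht hz => ?_⟩
    apply hx
    rw [ha, Complex.ofReal_inj.mp hz]
    exact ht
  -- the complex denominator
  set denC : ℂ → ℂ := fun z => ((b' : ℂ)) - ((a' : ℂ)) * H z with hdenC
  have hdenx : denC (x : ℂ) ≠ 0 := by
    rw [hdenC]
    dsimp only
    rw [hHre x hx]
    intro h
    apply hW0
    have h2 : ((b' - a' * (b / a) : ℝ) : ℂ) = 0 := by push_cast at h ⊢; linear_combination h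
    have h3 : b' - a' * (b / a) = 0 := by exact_mod_cast h2
    have := hWconst x
    field_simp at h3
    nlinarith [this]
  -- choice of ε
  have hHcont : ContinuousAt H (x : ℂ) :=
    (hHdiff.differentiableAt (hΩopen.mem_nhds hxΩ)).continuousAt
  have hdencont : ContinuousAt denC (x : ℂ) := by
    rw [hdenC]
    exact (continuousAt_const.sub (continuousAt_const.mul hHcont))
  obtain ⟨ε, hε0, hεR, hεf₁, hεu₀, hεden⟩ :
      ∃ ε : ℝ, 0 < ε ∧ ε ≤ R ∧ (∀ s : ℝ, |s - x| < ε → f₁ s ≠ 0) ∧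
        (∀ s : ℝ, |s - x| < ε → u₀ s ≠ 0) ∧
        (∀ z : ℂ, dist z (x : ℂ) < ε → denC z ≠ 0) := by
    obtain ⟨e1, he1, hf⟩ := Metric.eventually_nhds_iff.mp
      ((hs₁.1.continuous.continuousAt).eventually_ne (ha ▸ hx))
    obtain ⟨e2, he2, hu⟩ := Metric.eventually_nhds_iff.mp
      ((hu₀sol.1.continuous.continuousAt).eventually_ne (by rw [hu₀x]; exact hW0))
    obtain ⟨e3, he3, hd⟩ := Metric.eventually_nhds_iff.mp (hdencont.eventually_ne hdenx)
    refine ⟨min (min e1 e2) (min e3 R), lt_min (lt_min he1 he2) (lt_min he3 hR), ?_, ?_, ?_, ?_⟩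
    · exact (min_le_right _ _).trans (min_le_right _ _)
    · intro s hs
      apply hf
      rw [Real.dist_eq]
      exact hs.trans_le ((min_le_left _ _).trans (min_le_left _ _))
    · intro s hs
      apply hu
      rw [Real.dist_eq]
      exact hs.trans_le ((min_le_left _ _).trans (min_le_right _ _))
    · intro z hz
      apply hd
      exact hz.trans_le ((min_le_right _ _).trans (min_le_left _ _))
  -- the Möbius transform of H
  set G : ℂ → ℂ := fun z => (((a : ℂ)) * H z - ((b : ℂ))) / denC z with hG
  set S' : Set ℂ := {z : ℂ | 0 < z.im ∧ z.im < R} ∪ Metric.ball (x : ℂ) ε with hS'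
  have hS'open : IsOpen S' := by
    apply IsOpen.union _ Metric.isOpen_ball
    have : {z : ℂ | 0 < z.im ∧ z.im < R} = Complex.im ⁻¹' Set.Ioo 0 R := by
      ext w; simp [Set.mem_Ioo]
    rw [this]; exact isOpen_Ioo.preimage Complex.continuous_im
  have hballsub : Metric.ball (x : ℂ) ε ⊆ Ω := by
    intro z hz
    rw [Metric.mem_ball] at hz
    constructor
    · have h1 : |z.im| = |(z - (x:ℂ)).im| := by simp
      have h2 : |(z - (x:ℂ)).im| ≤ ‖z - (x:ℂ)‖ := Complex.abs_im_le_norm _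
      have h3 : ‖z - (x:ℂ)‖ = dist z (x:ℂ) := by
        rw [Complex.dist_eq]
      linarith
    · intro t ht hzt
      rw [hzt] at hz
      rw [Complex.dist_eq, ← Complex.ofReal_sub, Complex.norm_real, Real.norm_eq_abs] at hz
      exact hεf₁ t hz ht
  have hS'sub : S' ⊆ Ω := by
    intro z hz
    rcases hz with hz | hz
    · constructor
      · rw [abs_lt]; constructor <;> [linarith [hz.1]; exact hz.2]
      · intro t _ hzt
        have : z.im = 0 := by rw [hzt]; simp
        linarith [hz.1]
    · exact hballsub hz
  have hdenS' : ∀ z ∈ S', denC z ≠ 0 := by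
    intro z hz
    rcases hz with hz | hz
    · by_cases haz : a' = 0
      · rw [hdenC]
        dsimp only
        rw [haz]
        simp only [Complex.ofReal_zero, zero_mul, sub_zero]
        have hb'ne : b' ≠ 0 := by
          intro h
          apply hW0
          have h2 := hWconst x
          rw [← hb', ← ha', ← ha, ← hb] at h2
          rw [← h2, h, haz]
          ring
        exact_mod_cast hb'ne
      · have hHim : (H z).im ≠ 0 := by
          intro h
          have := hpick z hz.1 hz.2
          rw [h] at this
          simp at this
        intro h
        have : (denC z).im = -(a' * (H z).im) := by
          rw [hdenC]; simp [Complex.mul_im]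
        rw [h] at this
        simp at this
        rcases this with h1 | h1
        · exact haz h1
        · exact hHim h1
    · exact hεden z (Metric.mem_ball.mp hz)
  have hGdiffS' : DifferentiableOn ℂ G S' := by
    apply DifferentiableOn.div
    · exact (((hHdiff.mono hS'sub).const_mul _).sub (differentiableOn_const _))
    · exact ((differentiableOn_const _).sub ((hHdiff.mono hS'sub).const_mul _))
    · exact hdenS'
  have hGim_eq : ∀ z : ℂ, (G z).im = W * (H z).im / Complex.normSq (denC z) := by
    intro z
    rw [hG]
    dsimp only
    rw [im_div_helper]
    congr 1
    rw [hdenC]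
    dsimp only
    rw [map_sub, map_mul, Complex.conj_ofReal, Complex.conj_ofReal]
    have hW : a * b' - a' * b = W := hWconst x
    simp only [Complex.mul_im, Complex.sub_im, Complex.sub_re, Complex.mul_re,
      Complex.ofReal_re, Complex.ofReal_im, Complex.conj_re, Complex.conj_im]
    linear_combination (H z).im * hW
  have hGim : ∀ z : ℂ, 0 < z.im → z.im < R → 0 < (G z).im := by
    intro z h1 h2
    rw [hGim_eq]
    have hWH : 0 < W * (H z).im := by
      have := hpick z h1 h2
      nlinarith
    have hden : 0 < Complex.normSq (denC z) :=
      Complex.normSq_pos.mpr (hdenS' z (Or.inl ⟨h1, h2⟩))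
    positivity
  -- the real function g and its derivatives
  set g : ℝ → ℝ := fun t => v₀ t / u₀ t with hgdef
  set I : Set ℝ := Set.Ioo (x - ε) (x + ε) with hI
  have hxI : x ∈ I := by constructor <;> linarith
  have hmemI : ∀ t ∈ I, |t - x| < ε := by
    intro t ht
    rw [abs_lt]
    exact ⟨by linarith [ht.1], by linarith [ht.2]⟩
  have hIball : ∀ t ∈ I, (t : ℂ) ∈ Metric.ball (x : ℂ) ε := by
    intro t ht
    rw [Metric.mem_ball, Complex.dist_eq, ← Complex.ofReal_sub, Complex.norm_real, Real.norm_eq_abs]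
    exact hmemI t ht
  have heqI : ∀ t ∈ I, G (t : ℂ) = ((g t : ℝ) : ℂ) := by
    intro t ht
    have hf := hεf₁ t (hmemI t ht)
    have hu := hεu₀ t (hmemI t ht)
    rw [hG, hdenC]
    dsimp only
    rw [hHre t hf]
    rw [show ((a : ℂ) * ((f₂ t / f₁ t : ℝ) : ℂ) - (b : ℂ)) = ((a * (f₂ t / f₁ t) - b : ℝ) : ℂ)
        by push_cast; ring,
      show ((b' : ℂ) - (a' : ℂ) * ((f₂ t / f₁ t : ℝ) : ℂ)) = ((b' - a' * (f₂ t / f₁ t) : ℝ) : ℂ)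
        by push_cast; ring,
      ← Complex.ofReal_div, Complex.ofReal_inj]
    rw [hgdef, hu₀, hv₀] at *
    dsimp only
    have hu' : f₁ t * b' - a' * f₂ t ≠ 0 := by
      intro h0
      apply hu
      dsimp only
      linarith [h0]
    field_simp
  -- real derivatives of g
  have hgx : g x = 0 := by rw [hgdef]; dsimp only; rw [hv₀x]; simp
  have hg'I : ∀ t ∈ I, deriv g t = W ^ 2 / (u₀ t) ^ 2 := by
    intro t ht
    have hu := hεu₀ t (hmemI t ht)
    have hD : HasDerivAt g ((deriv v₀ t * u₀ t - v₀ t * deriv u₀ t) / (u₀ t) ^ 2) t :=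
      ((hv₀sol.diff t).hasDerivAt).div ((hu₀sol.diff t).hasDerivAt) hu
    rw [hD.deriv]
    rw [show deriv v₀ t * u₀ t - v₀ t * deriv u₀ t = W ^ 2 from by linarith [huv t]]
  have hg'x : deriv g x = 1 := by
    rw [hg'I x hxI, hu₀x]
    field_simp
  have hg3x : deriv (deriv (deriv g)) x = 2 * θ x := by
    have hg''I : ∀ t ∈ I, deriv (deriv g) t = -2 * W ^ 2 * deriv u₀ t / (u₀ t) ^ 3 := by
      intro t ht
      have hIopen_mem : I ∈ nhds t := Ioo_mem_nhds ht.1 ht.2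
      have hev : deriv g =ᶠ[nhds t] fun r => W ^ 2 / (u₀ r) ^ 2 :=
        Filter.eventuallyEq_of_mem hIopen_mem hg'I
      rw [hev.deriv_eq]
      have hu := hεu₀ t (hmemI t ht)
      have hden : HasDerivAt (fun r => (u₀ r) ^ 2) ((2 : ℕ) * u₀ t ^ 1 * deriv u₀ t) t :=
        ((hu₀sol.diff t).hasDerivAt).pow 2
      have hdd := (hasDerivAt_const t (W ^ 2)).div hden (pow_ne_zero 2 hu)
      have hd : HasDerivAt (fun r => W ^ 2 / (u₀ r) ^ 2) (-2 * W ^ 2 * deriv u₀ t / (u₀ t) ^ 3) t := by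
        refine hdd.congr_deriv ?_; symm
        field_simp
        ring
      exact hd.deriv
    have hev2 : deriv (deriv g) =ᶠ[nhds x] fun t => -2 * W ^ 2 * deriv u₀ t / (u₀ t) ^ 3 :=
      Filter.eventuallyEq_of_mem (Ioo_mem_nhds hxI.1 hxI.2) hg''I
    rw [hev2.deriv_eq]
    have hnum : HasDerivAt (fun t => -2 * W ^ 2 * deriv u₀ t) (-2 * W ^ 2 * deriv (deriv u₀) x) x :=
      ((hu₀sol.diff' x).hasDerivAt).const_mul _
    have hden : HasDerivAt (fun t => (u₀ t) ^ 3) ((3 : ℕ) * u₀ x ^ 2 * deriv u₀ x) x :=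
      ((hu₀sol.diff x).hasDerivAt).pow 3
    have hx3 : (u₀ x) ^ 3 ≠ 0 := by rw [hu₀x]; exact pow_ne_zero _ hW0
    have hdd : HasDerivAt (fun t => -2 * W ^ 2 * deriv u₀ t / u₀ t ^ 3) _ x := hnum.div hden hx3
    rw [hdd.deriv, hu₀x, hu₀'x, hu₀''x]
    field_simp
    ring
  -- transfer to complex derivatives
  have hdAt : ∀ (Φ : ℂ → ℂ), DifferentiableOn ℂ Φ S' →
      ∀ s ∈ I, DifferentiableAt ℂ Φ (s : ℂ) := by
    intro Φ hΦ s hs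
    exact hΦ.differentiableAt (hS'open.mem_nhds (Or.inr (hIball s hs)))
  have hGanal : AnalyticOnNhd ℂ G S' := hGdiffS'.analyticOnNhd hS'open
  have hG1diff : DifferentiableOn ℂ (deriv G) S' := hGanal.deriv.differentiableOn
  have hG2diff : DifferentiableOn ℂ (deriv (deriv G)) S' := hGanal.deriv.deriv.differentiableOn
  have hG3diff : DifferentiableOn ℂ (deriv (deriv (deriv G))) S' :=
    hGanal.deriv.deriv.deriv.differentiableOn
  have hG4diff : DifferentiableOn ℂ (deriv (deriv (deriv (deriv G)))) S' :=
    hGanal.deriv.deriv.deriv.deriv.differentiableOn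
  have e1 : ∀ t ∈ I, deriv G (t : ℂ) = ((deriv g t : ℝ) : ℂ) := by
    intro t ht
    exact deriv_cast_of_real (hdAt G hGdiffS') heqI ht
  have e2 : ∀ t ∈ I, deriv (deriv G) (t : ℂ) = ((deriv (deriv g) t : ℝ) : ℂ) := by
    intro t ht
    exact deriv_cast_of_real (hdAt _ hG1diff) e1 ht
  have e3 : ∀ t ∈ I, deriv (deriv (deriv G)) (t : ℂ) = ((deriv (deriv (deriv g)) t : ℝ) : ℂ) := by
    intro t ht
    exact deriv_cast_of_real (hdAt _ hG2diff) e2 ht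
  have hGx : G (x : ℂ) = 0 := by rw [heqI x hxI, hgx]; simp
  have hG1x : deriv G (x : ℂ) = 1 := by rw [e1 x hxI, hg'x]; simp
  have hG2x_im : (deriv (deriv G) (x : ℂ)).im = 0 := by rw [e2 x hxI]; simp
  have hG3x : deriv (deriv (deriv G)) (x : ℂ) = ((2 * θ x : ℝ) : ℂ) := by
    rw [e3 x hxI, hg3x]
  -- the vertical line functions
  -- vertical line machinery
  set ℓ : ℝ → ℂ := fun y => (x : ℂ) + (y : ℂ) * Complex.I with hℓdef
  have hℓd : ∀ y : ℝ, HasDerivAt ℓ Complex.I y := by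
    intro y
    have h1 : HasDerivAt (fun y : ℝ => (y : ℂ)) 1 y := by
      exact Complex.ofRealCLM.hasDerivAt (x := y)
    have h2 := (h1.mul_const Complex.I).const_add (x : ℂ)
    simpa [hℓdef] using h2
  have hℓim : ∀ y : ℝ, (ℓ y).im = y := by intro y; simp [hℓdef]
  have hℓball : ∀ y : ℝ, |y| < ε → ℓ y ∈ Metric.ball (x : ℂ) ε := by
    intro y hy
    rw [Metric.mem_ball, hℓdef]
    dsimp only
    rw [Complex.dist_eq]
    simpa using hy
  have hℓ0 : ℓ 0 = (x : ℂ) := by rw [hℓdef]; simp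
  have hvert : ∀ (Φ : ℂ → ℂ), DifferentiableOn ℂ Φ S' → ∀ y : ℝ, |y| < ε →
      HasDerivAt (fun y : ℝ => Φ (ℓ y)) (Complex.I * deriv Φ (ℓ y)) y := by
    intro Φ hΦ y hy
    have hmem : ℓ y ∈ S' := Or.inr (hℓball y hy)
    have hΦd : HasDerivAt Φ (deriv Φ (ℓ y)) (ℓ y) :=
      (hΦ.differentiableAt (hS'open.mem_nhds hmem)).hasDerivAt
    have := hΦd.scomp y (hℓd y)
    simpa [Function.comp_def, smul_eq_mul] using this
  set r : ℝ := Real.pi / R with hrdef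
  have hr0 : 0 < r := by positivity
  set NN : ℝ → ℝ := fun y => (G (ℓ y)).im with hNN
  set A : ℝ → ℝ := fun y => (deriv G (ℓ y)).re with hA
  set B : ℝ → ℝ := fun y => (deriv (deriv G) (ℓ y)).im with hB
  set Cc : ℝ → ℝ := fun y => (deriv (deriv (deriv G)) (ℓ y)).re with hCc
  set Dd : ℝ → ℝ := fun y => (deriv (deriv (deriv (deriv G))) (ℓ y)).im with hDd
  have hNNd : ∀ y : ℝ, |y| < ε → HasDerivAt NN (A y) y := by
    intro y hy
    have h2 := Complex.imCLM.hasFDerivAt.comp_hasDerivAt y (hvert G hGdiffS' y hy)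
    have h3 : HasDerivAt NN ((Complex.I * deriv G (ℓ y)).im) y := h2
    convert h3 using 1
    simp [hA, Complex.mul_im]
  have hAd : ∀ y : ℝ, |y| < ε → HasDerivAt A (-B y) y := by
    intro y hy
    have h2 := Complex.reCLM.hasFDerivAt.comp_hasDerivAt y (hvert _ hG1diff y hy)
    have h3 : HasDerivAt A ((Complex.I * deriv (deriv G) (ℓ y)).re) y := h2
    convert h3 using 1
    simp [hB, Complex.mul_re]
  have hBd : ∀ y : ℝ, |y| < ε → HasDerivAt B (Cc y) y := by
    intro y hy
    have h2 := Complex.imCLM.hasFDerivAt.comp_hasDerivAt y (hvert _ hG2diff y hy)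
    have h3 : HasDerivAt B ((Complex.I * deriv (deriv (deriv G)) (ℓ y)).im) y := h2
    convert h3 using 1
    simp [hCc, Complex.mul_im]
  have hCcd : ∀ y : ℝ, |y| < ε → HasDerivAt Cc (-Dd y) y := by
    intro y hy
    have h2 := Complex.reCLM.hasFDerivAt.comp_hasDerivAt y (hvert _ hG3diff y hy)
    have h3 : HasDerivAt Cc ((Complex.I * deriv (deriv (deriv (deriv G))) (ℓ y)).re) y := h2
    convert h3 using 1
    simp [hDd, Complex.mul_re]
  have hsind : ∀ y : ℝ, HasDerivAt (fun y => Real.sin (r * y)) (r * Real.cos (r * y)) y := by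
    intro y
    have h := (Real.hasDerivAt_sin (r * y)).comp y ((hasDerivAt_id y).const_mul r)
    have h2 : HasDerivAt (fun y => Real.sin (r * y)) (Real.cos (r * y) * (r * 1)) y := h
    convert h2 using 1
    ring
  have hrcosd : ∀ y : ℝ, HasDerivAt (fun y => r * Real.cos (r * y))
      (-(r ^ 2 * Real.sin (r * y))) y := by
    intro y
    have h := (Real.hasDerivAt_cos (r * y)).comp y ((hasDerivAt_id y).const_mul r)
    have h2 : HasDerivAt (fun y => Real.cos (r * y)) (-Real.sin (r * y) * (r * 1)) y := h
    have h3 := h2.const_mul r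
    refine h3.congr_deriv ?_; symm
    ring
  have hr2sind : ∀ y : ℝ, HasDerivAt (fun y => r ^ 2 * Real.sin (r * y))
      (r ^ 2 * (r * Real.cos (r * y))) y := fun y => (hsind y).const_mul (r ^ 2)
  -- the K functions
  set K0 : ℝ → ℝ := fun y => r * NN y - A y * Real.sin (r * y) with hK0
  set K1 : ℝ → ℝ := fun y => r * A y + B y * Real.sin (r * y)
    - A y * (r * Real.cos (r * y)) with hK1
  set K2 : ℝ → ℝ := fun y => -(r * B y) + Cc y * Real.sin (r * y)
    + 2 * B y * (r * Real.cos (r * y)) + A y * (r ^ 2 * Real.sin (r * y)) with hK2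
  set K3 : ℝ → ℝ := fun y => -(r * Cc y) - Dd y * Real.sin (r * y)
    + 3 * Cc y * (r * Real.cos (r * y)) - 3 * B y * (r ^ 2 * Real.sin (r * y))
    + A y * (r ^ 3 * Real.cos (r * y)) with hK3
  have hK0d : ∀ y : ℝ, |y| < ε → HasDerivAt K0 (K1 y) y := by
    intro y hy
    have h := ((hNNd y hy).const_mul r).sub ((hAd y hy).mul (hsind y))
    refine h.congr_deriv ?_; symm
    rw [hK1]
    dsimp only
    ring
  have hK1d : ∀ y : ℝ, |y| < ε → HasDerivAt K1 (K2 y) y := by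
    intro y hy
    have h := (((hAd y hy).const_mul r).add ((hBd y hy).mul (hsind y))).sub
      ((hAd y hy).mul (hrcosd y))
    refine h.congr_deriv ?_; symm
    rw [hK2]
    dsimp only
    ring
  have hK2d : ∀ y : ℝ, |y| < ε → HasDerivAt K2 (K3 y) y := by
    intro y hy
    have h := (((((hBd y hy).const_mul r).neg).add ((hCcd y hy).mul (hsind y))).add
      (((hBd y hy).const_mul 2).mul (hrcosd y))).add ((hAd y hy).mul (hr2sind y))
    refine h.congr_deriv ?_; symm
    rw [hK3]
    dsimp only
    ring
  -- values at 0
  have hA0 : A 0 = 1 := by rw [hA]; dsimp only; rw [hℓ0, hG1x]; simp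
  have hB0 : B 0 = 0 := by rw [hB]; dsimp only; rw [hℓ0]; exact hG2x_im
  have hCc0 : Cc 0 = 2 * θ x := by rw [hCc]; dsimp only; rw [hℓ0, hG3x]; simp
  have hNN0 : NN 0 = 0 := by rw [hNN]; dsimp only; rw [hℓ0, hGx]; simp
  have hK00 : K0 0 = 0 := by rw [hK0]; dsimp only; rw [hNN0, hA0]; simp
  have hK10 : K1 0 = 0 := by rw [hK1]; dsimp only; rw [hA0, hB0]; simp
  have hK20 : K2 0 = 0 := by rw [hK2]; dsimp only; rw [hA0, hB0]; simp
  have hK30 : K3 0 = 4 * θ x * r + r ^ 3 := by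
    rw [hK3]; dsimp only; rw [hA0, hB0, hCc0]; simp; ring
  -- nonnegativity of K0 on (0, ε)
  have hK0nonneg : ∀ y : ℝ, 0 < y → y < ε → 0 ≤ K0 y := by
    intro y hy1 hy2
    have hzim : (ℓ y).im = y := hℓim y
    have h1 : 0 < (ℓ y).im := by rw [hzim]; exact hy1
    have h2 : (ℓ y).im < R := by rw [hzim]; linarith
    have hsp := sp_strip hR (hGdiffS'.mono (fun z hz => Or.inl hz)) hGim h1 h2
    rw [hzim] at hsp
    have hsin_nonneg : 0 ≤ Real.sin (r * y) := by
      apply Real.sin_nonneg_of_nonneg_of_le_pi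
      · positivity
      · have h5 : r * y ≤ r * R := mul_le_mul_of_nonneg_left (by linarith) hr0.le
        have hrR : r * R = Real.pi := by rw [hrdef]; field_simp
        linarith
    have heqsin : R / Real.pi * Real.sin (Real.pi / R * y) = Real.sin (r * y) / r := by
      rw [hrdef]
      field_simp
    rw [heqsin] at hsp
    have hsp2 : ‖deriv G (ℓ y)‖ * Real.sin (r * y) ≤ r * NN y := by
      have h3 := mul_le_mul_of_nonneg_left hsp hr0.le
      calc ‖deriv G (ℓ y)‖ * Real.sin (r * y)
          = r * (‖deriv G (ℓ y)‖ * (Real.sin (r * y) / r)) := by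
            field_simp
        _ ≤ r * (G (ℓ y)).im := h3
        _ = r * NN y := rfl
    have hre_le : A y * Real.sin (r * y) ≤ ‖deriv G (ℓ y)‖ * Real.sin (r * y) :=
      mul_le_mul_of_nonneg_right (Complex.re_le_norm _) hsin_nonneg
    rw [hK0]
    dsimp only
    linarith
  -- conclusion by contradiction
  by_contra hcon
  push_neg at hcon
  have hK30neg : K3 0 < 0 := by
    rw [hK30]
    have hr2 : r ^ 2 = Real.pi ^ 2 / R ^ 2 := by rw [hrdef]; rw [div_pow]
    have h4 : 4 * θ x + r ^ 2 < 0 := by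
      rw [hr2]
      have hhh : Real.pi ^ 2 / R ^ 2 = 4 * (Real.pi ^ 2 / (4 * R ^ 2)) := by ring
      rw [hhh]
      linarith
    nlinarith
  have hevK3 : ∀ᶠ y in nhds (0 : ℝ), K3 y < 0 := by
    have hK3cont : ContinuousAt K3 0 := by
      have h0ε : |(0:ℝ)| < ε := by simpa using hε0
      have hAc : ContinuousAt A 0 := (hAd 0 h0ε).differentiableAt.continuousAt
      have hBc : ContinuousAt B 0 := (hBd 0 h0ε).differentiableAt.continuousAt
      have hCcc : ContinuousAt Cc 0 := (hCcd 0 h0ε).differentiableAt.continuousAt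
      have hDdc : ContinuousAt Dd 0 := by
        have hc : ContinuousAt (deriv (deriv (deriv (deriv G)))) (ℓ 0) :=
          (hG4diff.differentiableAt (hS'open.mem_nhds (Or.inr (hℓball 0 h0ε)))).continuousAt
        exact Complex.continuous_im.continuousAt.comp
          (hc.comp (hℓd 0).differentiableAt.continuousAt)
      have csin : ContinuousAt (fun y : ℝ => Real.sin (r * y)) 0 :=
        (Real.continuous_sin.comp (continuous_const.mul continuous_id)).continuousAt
      have crcos : ContinuousAt (fun y : ℝ => r * Real.cos (r * y)) 0 :=
        (continuous_const.mul (Real.continuous_cos.comp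
          (continuous_const.mul continuous_id))).continuousAt
      have cr2sin : ContinuousAt (fun y : ℝ => r ^ 2 * Real.sin (r * y)) 0 :=
        (continuous_const.mul (Real.continuous_sin.comp
          (continuous_const.mul continuous_id))).continuousAt
      have cr3cos : ContinuousAt (fun y : ℝ => r ^ 3 * Real.cos (r * y)) 0 :=
        (continuous_const.mul (Real.continuous_cos.comp
          (continuous_const.mul continuous_id))).continuousAt
      rw [hK3]
      exact (((((hCcc.const_mul r).neg).sub (hDdc.mul csin)).add
        ((hCcc.const_mul 3).mul crcos)).sub ((hBc.const_mul 3).mul cr2sin)).add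
        (hAc.mul cr3cos)
    exact Filter.Tendsto.eventually_lt_const hK30neg hK3cont
  obtain ⟨δ₀, hδ₀, hKneg⟩ := Metric.eventually_nhds_iff.mp hevK3
  set δ : ℝ := min (δ₀ / 2) (ε / 2) with hδdef
  have hδpos : 0 < δ := lt_min (by linarith) (by linarith)
  have hδε : δ < ε := (min_le_right _ _).trans_lt (by linarith)
  have hδδ₀ : δ < δ₀ := (min_le_left _ _).trans_lt (by linarith)
  have hmemIccε : ∀ y ∈ Set.Icc (0:ℝ) δ, |y| < ε := by
    intro y hy
    rw [abs_lt]
    constructor <;> [linarith [hy.1]; linarith [hy.2]]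
  have hanti : ∀ (F F' : ℝ → ℝ), (∀ y : ℝ, |y| < ε → HasDerivAt F (F' y) y) →
      (∀ y ∈ Set.Ioo (0:ℝ) δ, F' y < 0) → StrictAntiOn F (Set.Icc (0:ℝ) δ) := by
    intro F F' hF hF'
    apply strictAntiOn_of_deriv_neg (convex_Icc _ _)
    · intro y hy
      exact ((hF y (hmemIccε y hy)).differentiableAt.continuousAt).continuousWithinAt
    · intro y hy
      rw [interior_Icc] at hy
      rw [(hF y (hmemIccε y (Set.Ioo_subset_Icc_self hy))).deriv]
      exact hF' y hy
  have hK2neg : ∀ y ∈ Set.Ioo (0:ℝ) δ, K2 y < 0 := by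
    have h := hanti K2 K3 hK2d (fun y hy => by
      apply hKneg
      rw [Real.dist_eq, sub_zero, abs_of_pos hy.1]
      linarith [hy.2])
    intro y hy
    have := h (Set.left_mem_Icc.mpr hδpos.le) ⟨hy.1.le, hy.2.le⟩ hy.1
    rw [hK20] at this
    exact this
  have hK1neg : ∀ y ∈ Set.Ioo (0:ℝ) δ, K1 y < 0 := by
    have h := hanti K1 K2 hK1d hK2neg
    intro y hy
    have := h (Set.left_mem_Icc.mpr hδpos.le) ⟨hy.1.le, hy.2.le⟩ hy.1
    rw [hK10] at this
    exact this
  have hK0neg : K0 (δ / 2) < 0 := by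
    have h := hanti K0 K1 hK0d hK1neg
    have h2 := h (Set.left_mem_Icc.mpr hδpos.le)
      (⟨by linarith, by linarith⟩ : δ / 2 ∈ Set.Icc (0:ℝ) δ) (by linarith)
    rw [hK00] at h2
    exact h2
  have := hK0nonneg (δ / 2) (by linarith) (by linarith)
  linarith





end Aux

noncomputable section

open MeasureTheory Filter

/-- If θ is smooth, `0 < R`, and Hypothesis (H_R) holds, then
`θ(x) ≥ -π²/(4R²)` for every `x`. -/
theorem stmt6 (θ : ℝ → ℝ) (hθ : ContDiff ℝ (⊤ : ℕ∞) θ) (R : ℝ) (hR : 0 < R)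
    (hHyp : HypR θ R) :
    ∀ x : ℝ, -(Real.pi ^ 2 / (4 * R ^ 2)) ≤ θ x := by
  obtain ⟨f₁, f₂, H, hs₁, hs₂, hW0, hHre, hHdiff, _hpole, hpick⟩ := hHyp
  set W : ℝ := f₁ 0 * deriv f₂ 0 - deriv f₁ 0 * f₂ 0 with hWdef
  have hWconst : ∀ t, f₁ t * deriv f₂ t - deriv f₁ t * f₂ t = W :=
    fun t => wronskian_const hs₁ hs₂ t 0
  have main : ∀ x : ℝ, f₁ x ≠ 0 → -(Real.pi ^ 2 / (4 * R ^ 2)) ≤ θ x :=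
    fun x hx => main_bound hR hs₁ hs₂ hW0 hWconst hHre hHdiff hpick hx
  intro x
  by_cases hx : f₁ x = 0
  · -- density argument
    have hd1 : deriv f₁ x ≠ 0 := by
      intro h
      have := hWconst x
      rw [hx, h] at this
      simp at this
      exact hW0 this.symm
    have hslope : Filter.Tendsto (slope f₁ x) (nhdsWithin x {x}ᶜ) (nhds (deriv f₁ x)) :=
      hasDerivAt_iff_tendsto_slope.mp ((hs₁.diff x).hasDerivAt)
    have hne : ∀ᶠ s in nhdsWithin x {x}ᶜ, slope f₁ x s ≠ 0 :=
      hslope.eventually_ne hd1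
    have hf₁ne : ∀ᶠ s in nhdsWithin x {x}ᶜ, f₁ s ≠ 0 := by
      filter_upwards [hne, self_mem_nhdsWithin] with s hs hs'
      intro h
      apply hs
      rw [slope_def_field, h, hx]
      simp
    have hev : ∀ᶠ s in nhdsWithin x {x}ᶜ, -(Real.pi ^ 2 / (4 * R ^ 2)) ≤ θ s := by
      filter_upwards [hf₁ne] with s hs using main s hs
    have htend : Filter.Tendsto θ (nhdsWithin x {x}ᶜ) (nhds (θ x)) :=
      (hθ.continuous.continuousAt).mono_left nhdsWithin_le_nhds
    exact ge_of_tendsto htend hev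
  · exact main x hx

end
end

section
/- Let θ : ℝ → ℝ be smooth. Then for every x ∈ ℝ: 𝒮_1^θ(x) = 1, 𝒮_2^θ(x) = 0, 𝒮_3^θ(x) = 2·θ(x), 𝒮_4^θ(x) = 2·θ'(x), 𝒮_5^θ(x) = 2·θ''(x) + 16·θ(x)², 𝒮_6^θ(x) = 2·θ'''(x) + 52·θ(x)·θ'(x), and 𝒮_7^θ(x) = 2·θ⁽⁴⁾(x) + 76·θ(x)·θ''(x) + 52·θ'(x)² + 272·θ(x)³. -/
noncomputable section

open MeasureTheory Filter

private lemma iterDeriv_congr_nhds : ∀ (n : ℕ) {f g : ℝ → ℝ} {x : ℝ},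
    f =ᶠ[nhds x] g → iteratedDeriv n f x = iteratedDeriv n g x := by
  intro n
  induction n with
  | zero => intro f g x h; simpa using h.eq_of_nhds
  | succ n ih =>
    intro f g x h
    rw [iteratedDeriv_succ', iteratedDeriv_succ']
    exact ih h.deriv

/-- Explicit formulas for the first seven higher order Schwarzians:
`𝒮₁ = 1`, `𝒮₂ = 0`, `𝒮₃ = 2θ`, `𝒮₄ = 2θ'`, `𝒮₅ = 2θ'' + 16θ²`,
`𝒮₆ = 2θ''' + 52θθ'`, `𝒮₇ = 2θ⁗ + 76θθ'' + 52(θ')² + 272θ³`. -/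
theorem stmt9 (θ : ℝ → ℝ) (hθ : ContDiff ℝ (⊤ : ℕ∞) θ) :
    ∀ (x : ℝ) (f₁ f₂ : ℝ → ℝ), IsFundPair θ x f₁ f₂ →
      iteratedDeriv 1 (fun t => f₂ t / f₁ t) x = 1 ∧
      iteratedDeriv 2 (fun t => f₂ t / f₁ t) x = 0 ∧
      iteratedDeriv 3 (fun t => f₂ t / f₁ t) x = 2 * θ x ∧
      iteratedDeriv 4 (fun t => f₂ t / f₁ t) x = 2 * deriv θ x ∧
      iteratedDeriv 5 (fun t => f₂ t / f₁ t) x =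
        2 * iteratedDeriv 2 θ x + 16 * θ x ^ 2 ∧
      iteratedDeriv 6 (fun t => f₂ t / f₁ t) x =
        2 * iteratedDeriv 3 θ x + 52 * θ x * deriv θ x ∧
      iteratedDeriv 7 (fun t => f₂ t / f₁ t) x =
        2 * iteratedDeriv 4 θ x + 76 * θ x * iteratedDeriv 2 θ x +
          52 * (deriv θ x) ^ 2 + 272 * θ x ^ 3 := by
  intro x u v hfp
  obtain ⟨⟨hu, huode⟩, ⟨hv, hvode⟩, hux, hu'x, hvx, hv'x⟩ := hfp
  have htop : ∀ m : ℕ, (m : WithTop ℕ∞) < ((⊤ : ℕ∞) : WithTop ℕ∞) := by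
    intro m
    exact_mod_cast ENat.coe_lt_top m
  have hder : ∀ (f : ℝ → ℝ), ContDiff ℝ (⊤ : ℕ∞) f →
      ∀ (j : ℕ) (t : ℝ), HasDerivAt (iteratedDeriv j f) (iteratedDeriv (j + 1) f t) t := by
    intro f hf j t
    rw [iteratedDeriv_succ]
    exact ((hf.differentiable_iteratedDeriv j (htop j)) t).hasDerivAt
  have hT : ∀ (j : ℕ) (t : ℝ), HasDerivAt (iteratedDeriv j θ) (iteratedDeriv (j + 1) θ t) t :=
    hder θ hθ
  have hU : ∀ t, HasDerivAt u (deriv u t) t := by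
    intro t
    have := hder u hu 0 t
    rw [iteratedDeriv_zero] at this
    exact this.congr_deriv (by rw [iteratedDeriv_one])
  have hV : ∀ t, HasDerivAt v (deriv v t) t := by
    intro t
    have := hder v hv 0 t
    rw [iteratedDeriv_zero] at this
    exact this.congr_deriv (by rw [iteratedDeriv_one])
  have hPd : Differentiable ℝ (deriv u) := by
    have := hu.differentiable_iteratedDeriv 1 (htop 1)
    rwa [iteratedDeriv_one] at this
  have hQd : Differentiable ℝ (deriv v) := by
    have := hv.differentiable_iteratedDeriv 1 (htop 1)
    rwa [iteratedDeriv_one] at this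
  have hP : ∀ t, HasDerivAt (deriv u) (-(iteratedDeriv 0 θ t * u t)) t := by
    intro t
    refine ((hPd t).hasDerivAt).congr_deriv ?_
    have := huode t
    rw [iteratedDeriv_zero]
    linarith
  have hQ : ∀ t, HasDerivAt (deriv v) (-(θ t * v t)) t := by
    intro t
    refine ((hQd t).hasDerivAt).congr_deriv ?_
    have := hvode t
    linarith
  -- Wronskian is constantly 1
  have hWd : ∀ t, HasDerivAt (fun s => u s * deriv v s - deriv u s * v s) 0 t := by
    intro t
    have h := ((hU t).mul (hQ t)).sub ((hP t).mul (hV t))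
    exact h.congr_deriv (by rw [iteratedDeriv_zero]; ring)
  have hW : ∀ t, u t * deriv v t - deriv u t * v t = 1 := by
    intro t
    have hc := is_const_of_deriv_eq_zero (f := fun s => u s * deriv v s - deriv u s * v s)
      (fun s => (hWd s).differentiableAt) (fun s => (hWd s).deriv) t x
    try simp only at hc
    rw [hc, hux, hu'x, hvx, hv'x]
    ring
  -- the first derivative of h = v/u
  have stepH : ∀ t, u t ≠ 0 → HasDerivAt (fun s => v s / u s) (1 / u t ^ 2) t := by
    intro t ht
    have h := (hV t).div (hU t) ht
    refine h.congr_deriv ?_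
    rw [div_eq_div_iff (pow_ne_zero _ ht) (pow_ne_zero _ ht)]
    have := hW t
    nlinarith [hW t]
  have step0 : ∀ t, u t ≠ 0 → HasDerivAt (fun s => 1 / u s ^ 2) (((-2 : ℝ) * (deriv u t ^ 1)) / u t ^ 3) t := by
    intro t ht
    have h := ((hasDerivAt_const t (1 : ℝ))).div ((hU t).pow 2) (pow_ne_zero _ ht)
    exact h.congr_deriv (by simp only [Pi.pow_apply, Pi.add_apply, Pi.mul_apply, Pi.neg_apply, Pi.sub_apply, Pi.div_apply]; field_simp; ring)
  have step1 : ∀ t, u t ≠ 0 → HasDerivAt (fun s => ((-2 : ℝ) * (deriv u s ^ 1)) / u s ^ 3) (((6 : ℝ) * (deriv u t ^ 2) + (2 : ℝ) * (iteratedDeriv 0 θ t ^ 1 * u t ^ 2)) / u t ^ 4) t := by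
    intro t ht
    have h := ((((hP t).pow 1).const_mul (-2 : ℝ))).div ((hU t).pow 3) (pow_ne_zero _ ht)
    exact h.congr_deriv (by simp only [Pi.pow_apply, Pi.add_apply, Pi.mul_apply, Pi.neg_apply, Pi.sub_apply, Pi.div_apply]; field_simp; ring)
  have step2 : ∀ t, u t ≠ 0 → HasDerivAt (fun s => ((6 : ℝ) * (deriv u s ^ 2) + (2 : ℝ) * (iteratedDeriv 0 θ s ^ 1 * u s ^ 2)) / u s ^ 4) (((-16 : ℝ) * (iteratedDeriv 0 θ t ^ 1 * u t ^ 2 * deriv u t ^ 1) + (-24 : ℝ) * (deriv u t ^ 3) + (2 : ℝ) * (iteratedDeriv 1 θ t ^ 1 * u t ^ 3)) / u t ^ 5) t := by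
    intro t ht
    have h := (((((hP t).pow 2).const_mul (6 : ℝ)).add ((((hT 0 t).pow 1).mul ((hU t).pow 2)).const_mul (2 : ℝ)))).div ((hU t).pow 4) (pow_ne_zero _ ht)
    exact h.congr_deriv (by simp only [Pi.pow_apply, Pi.add_apply, Pi.mul_apply, Pi.neg_apply, Pi.sub_apply, Pi.div_apply]; field_simp; ring)
  have step3 : ∀ t, u t ≠ 0 → HasDerivAt (fun s => ((-16 : ℝ) * (iteratedDeriv 0 θ s ^ 1 * u s ^ 2 * deriv u s ^ 1) + (-24 : ℝ) * (deriv u s ^ 3) + (2 : ℝ) * (iteratedDeriv 1 θ s ^ 1 * u s ^ 3)) / u s ^ 5) (((-20 : ℝ) * (iteratedDeriv 1 θ t ^ 1 * u t ^ 3 * deriv u t ^ 1) + (120 : ℝ) * (iteratedDeriv 0 θ t ^ 1 * u t ^ 2 * deriv u t ^ 2) + (120 : ℝ) * (deriv u t ^ 4) + (16 : ℝ) * (iteratedDeriv 0 θ t ^ 2 * u t ^ 4) + (2 : ℝ) * (iteratedDeriv 2 θ t ^ 1 * u t ^ 4)) / u t ^ 6) t := by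
    intro t ht
    have h := ((((((((hT 0 t).pow 1).mul ((hU t).pow 2)).mul ((hP t).pow 1)).const_mul (-16 : ℝ)).add (((hP t).pow 3).const_mul (-24 : ℝ))).add ((((hT 1 t).pow 1).mul ((hU t).pow 3)).const_mul (2 : ℝ)))).div ((hU t).pow 5) (pow_ne_zero _ ht)
    exact h.congr_deriv (by simp only [Pi.pow_apply, Pi.add_apply, Pi.mul_apply, Pi.neg_apply, Pi.sub_apply, Pi.div_apply]; field_simp; ring)
  have step4 : ∀ t, u t ≠ 0 → HasDerivAt (fun s => ((-20 : ℝ) * (iteratedDeriv 1 θ s ^ 1 * u s ^ 3 * deriv u s ^ 1) + (120 : ℝ) * (iteratedDeriv 0 θ s ^ 1 * u s ^ 2 * deriv u s ^ 2) + (120 : ℝ) * (deriv u s ^ 4) + (16 : ℝ) * (iteratedDeriv 0 θ s ^ 2 * u s ^ 4) + (2 : ℝ) * (iteratedDeriv 2 θ s ^ 1 * u s ^ 4)) / u s ^ 6) (((-272 : ℝ) * (iteratedDeriv 0 θ t ^ 2 * u t ^ 4 * deriv u t ^ 1) + (-24 : ℝ) * (iteratedDeriv 2 θ t ^ 1 *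 u t ^ 4 * deriv u t ^ 1) + (180 : ℝ) * (iteratedDeriv 1 θ t ^ 1 * u t ^ 3 * deriv u t ^ 2) + (-960 : ℝ) * (iteratedDeriv 0 θ t ^ 1 * u t ^ 2 * deriv u t ^ 3) + (-720 : ℝ) * (deriv u t ^ 5) + (52 : ℝ) * (iteratedDeriv 0 θ t ^ 1 * iteratedDeriv 1 θ t ^ 1 * u t ^ 5) + (2 : ℝ) * (iteratedDeriv 3 θ t ^ 1 * u t ^ 5)) / u t ^ 7) t := by
    intro t ht
    have h := ((((((((((hT 1 t).pow 1).mul ((hU t).pow 3)).mul ((hP t).pow 1)).const_mul (-20 : ℝ)).add (((((hT 0 t).pow 1).mul ((hU t).pow 2)).mul ((hP t).pow 2)).const_mul (120 : ℝ))).add (((hP t).pow 4).const_mul (120 : ℝ))).add ((((hT 0 t).pow 2).mul ((hU t).pow 4)).const_mul (16 : ℝ))).add ((((hT 2 t).pow 1).mul ((hU t).pow 4)).const_mul (2 : ℝ)))).div ((hU t).pow 6) (pow_ne_zero _ ht)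
    exact h.congr_deriv (by simp only [Pi.pow_apply, Pi.add_apply, Pi.mul_apply, Pi.neg_apply, Pi.sub_apply, Pi.div_apply]; field_simp; ring)
  have step5 : ∀ t, u t ≠ 0 → HasDerivAt (fun s => ((-272 : ℝ) * (iteratedDeriv 0 θ s ^ 2 * u s ^ 4 * deriv u s ^ 1) + (-24 : ℝ) * (iteratedDeriv 2 θ s ^ 1 * u s ^ 4 * deriv u s ^ 1) + (180 : ℝ) * (iteratedDeriv 1 θ s ^ 1 * u s ^ 3 * deriv u s ^ 2) + (-960 : ℝ) * (iteratedDeriv 0 θ s ^ 1 * u s ^ 2 * deriv u s ^ 3) + (-720 : ℝ) * (deriv u s ^ 5) + (52 : ℝ) * (iteratedDeriv 0 θ s ^ 1 * iteratedDeriv 1 θ s ^ 1 * u s ^ 5) + (2 : ℝ) * (iteratedDeriv 3 θ s ^ 1 * u s ^ 5)) / u s ^ 7) (((-1008 : ℝ) * (iteratedDeriv 0 θ t ^ 1 * iteratedDeriv 1 θ t ^ 1 * u t ^ 5 * deriv u t ^ 1) + (-28 : ℝ) * (iteratedDeriv 3 θ t ^ 1 * u t ^ 5 * deriv u t ^ 1)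 + (3696 : ℝ) * (iteratedDeriv 0 θ t ^ 2 * u t ^ 4 * deriv u t ^ 2) + (252 : ℝ) * (iteratedDeriv 2 θ t ^ 1 * u t ^ 4 * deriv u t ^ 2) + (-1680 : ℝ) * (iteratedDeriv 1 θ t ^ 1 * u t ^ 3 * deriv u t ^ 3) + (8400 : ℝ) * (iteratedDeriv 0 θ t ^ 1 * u t ^ 2 * deriv u t ^ 4) + (5040 : ℝ) * (deriv u t ^ 6) + (76 : ℝ) * (iteratedDeriv 0 θ t ^ 1 * iteratedDeriv 2 θ t ^ 1 * u t ^ 6) + (272 : ℝ) * (iteratedDeriv 0 θ t ^ 3 * u t ^ 6) + (52 : ℝ) * (iteratedDeriv 1 θ t ^ 2 * u t ^ 6) + (2 : ℝ) * (iteratedDeriv 4 θ t ^ 1 * u t ^ 6)) / u t ^ 8) t := by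
    intro t ht
    have h := ((((((((((((hT 0 t).pow 2).mul ((hU t).pow 4)).mul ((hP t).pow 1)).const_mul (-272 : ℝ)).add (((((hT 2 t).pow 1).mul ((hU t).pow 4)).mul ((hP t).pow 1)).const_mul (-24 : ℝ))).add (((((hT 1 t).pow 1).mul ((hU t).pow 3)).mul ((hP t).pow 2)).const_mul (180 : ℝ))).add (((((hT 0 t).pow 1).mul ((hU t).pow 2)).mul ((hP t).pow 3)).const_mul (-960 : ℝ))).add (((hP t).pow 5).const_mul (-720 : ℝ))).add (((((hT 0 t).pow 1).mul ((hT 1 t).pow 1)).mul ((hU t).pow 5)).const_mul (52 : ℝ))).add ((((hT 3 t).pow 1).mul ((hU t).pow 5)).const_mul (2 : ℝ)))).div ((hU t).pow 7) (pow_ne_zero _ ht)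
    exact h.congr_deriv (by simp only [Pi.pow_apply, Pi.add_apply, Pi.mul_apply, Pi.neg_apply, Pi.sub_apply, Pi.div_apply]; field_simp; ring)
  have hOpen : IsOpen {t : ℝ | u t ≠ 0} := isOpen_ne.preimage hu.continuous
  have hx0 : u x ≠ 0 := by rw [hux]; exact one_ne_zero
  have hmem : {t : ℝ | u t ≠ 0} ∈ nhds x := hOpen.mem_nhds hx0
  have chain : ∀ (f g : ℝ → ℝ), (∀ t, u t ≠ 0 → HasDerivAt f (g t) t) →
      ∀ n, iteratedDeriv (n + 1) f x = iteratedDeriv n g x := by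
    intro f g hfg n
    rw [iteratedDeriv_succ']
    exact iterDeriv_congr_nhds n (Filter.eventually_of_mem hmem (fun t ht => (hfg t ht).deriv))
  have c0 := chain _ _ stepH
  have c1 := chain _ _ step0
  have c2 := chain _ _ step1
  have c3 := chain _ _ step2
  have c4 := chain _ _ step3
  have c5 := chain _ _ step4
  have c6 := chain _ _ step5
  refine ⟨?_, ?_, ?_, ?_, ?_, ?_, ?_⟩
  · rw [c0 0, iteratedDeriv_zero]
    simp [hux]
  · rw [c0 1, c1 0, iteratedDeriv_zero]
    simp [hux, hu'x]
  · rw [c0 2, c1 1, c2 0, iteratedDeriv_zero]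
    simp [hux, hu'x, iteratedDeriv_zero]
  · rw [c0 3, c1 2, c2 1, c3 0, iteratedDeriv_zero]
    simp [hux, hu'x, iteratedDeriv_zero, iteratedDeriv_one]
  · rw [c0 4, c1 3, c2 2, c3 1, c4 0, iteratedDeriv_zero]
    simp [hux, hu'x, iteratedDeriv_zero, iteratedDeriv_one]
    ring
  · rw [c0 5, c1 4, c2 3, c3 2, c4 1, c5 0, iteratedDeriv_zero]
    simp [hux, hu'x, iteratedDeriv_zero, iteratedDeriv_one]
    ring
  · rw [c0 6, c1 5, c2 4, c3 3, c4 2, c5 1, c6 0, iteratedDeriv_zero]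
    simp [hux, hu'x, iteratedDeriv_zero, iteratedDeriv_one]
    ring

end
end

section
/- Let θ : ℝ → ℝ be smooth. For each n ≥ 1 the function x ↦ 𝒮_n^θ(x) is smooth on ℝ, and for every integer n ≥ 1 and every x ∈ ℝ the recursion 𝒮_{n+1}^θ(x) = (d/dx)𝒮_n^θ(x) + θ(x)·Σ_{k=1}^{n−1} C(n,k)·𝒮_k^θ(x)·𝒮_{n−k}^θ(x) holds, where C(n,k) denotes the binomial coefficient. -/
noncomputable section
namespace Stmt10
open Set Filter

variable {θ : ℝ → ℝ}

/-- Prüfer phase vector field. -/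
def F (θ : ℝ → ℝ) (t x : ℝ) : ℝ :=
  Real.cos x * Real.cos x + θ t * (Real.sin x * Real.sin x)

lemma hasDerivAt_F (t x : ℝ) :
    HasDerivAt (F θ t) ((θ t - 1) * Real.sin (2*x)) x := by
  have hc := Real.hasDerivAt_cos x
  have hs := Real.hasDerivAt_sin x
  have h := ((hc.mul hc).add (((hs.mul hs)).const_mul (θ t)))
  convert h using 1 <;> try rfl
  rw [Real.sin_two_mul]; ring

lemma lipschitz_F {M : ℝ} (hM : 0 ≤ M) (t : ℝ) (ht : |θ t| ≤ M) :
    LipschitzWith (M + 1).toNNReal (F θ t) := by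
  apply lipschitzWith_of_nnnorm_deriv_le
    (fun x => (hasDerivAt_F t x).differentiableAt)
  intro x
  rw [← NNReal.coe_le_coe, coe_nnnorm, Real.coe_toNNReal _ (by linarith)]
  rw [(hasDerivAt_F t x).deriv, Real.norm_eq_abs, abs_mul]
  have h1 : |θ t - 1| ≤ M + 1 := by
    rw [abs_sub_comm]
    calc |1 - θ t| ≤ |(1:ℝ)| + |θ t| := abs_sub _ _
    _ ≤ M + 1 := by rw [abs_one]; linarith
  have h2 : |Real.sin (2*x)| ≤ 1 := abs_le.2 ⟨Real.neg_one_le_sin _, Real.sin_le_one _⟩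
  calc |θ t - 1| * |Real.sin (2*x)| ≤ (M+1) * 1 :=
        mul_le_mul h1 h2 (abs_nonneg _) (by linarith)
  _ = M + 1 := by ring

lemma exists_phase (hθc : Continuous θ) (φ0 : ℝ) (n : ℕ) :
    ∃ φ : ℝ → ℝ, φ 0 = φ0 ∧
      ∀ t ∈ Ioo (-(n+1) : ℝ) (n+1), HasDerivAt φ (F θ t (φ t)) t := by
  set a : ℝ := (n : ℝ) + 1 with ha
  have ha0 : (0:ℝ) < a := by positivity
  obtain ⟨M0, hM0⟩ := (isCompact_Icc (a := -a) (b := a)).exists_bound_of_continuousOn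
    hθc.continuousOn
  set M : ℝ := max M0 0 with hM
  have hMnn : 0 ≤ M := le_max_right _ _
  have hpl : IsPicardLindelof (F θ) (tmin := -a) (tmax := a) ⟨0, by constructor <;> linarith⟩
      φ0 ((M+1)*a).toNNReal 0 (M+1).toNNReal (M+1).toNNReal := by
    constructor
    · intro t htI
      exact (lipschitz_F hMnn t ((hM0 t htI).trans (le_max_left _ _))).lipschitzOnWith
    · intro x _
      exact (continuous_const.add (hθc.mul continuous_const)).continuousOn
    · intro t htI x _
      have hb : |θ t| ≤ M := (hM0 t htI).trans (le_max_left _ _)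
      rw [Real.norm_eq_abs, Real.coe_toNNReal _ (by linarith)]
      have h1 : |Real.cos x * Real.cos x| ≤ 1 := by
        rw [abs_mul]
        have := abs_le.2 ⟨Real.neg_one_le_cos x, Real.cos_le_one x⟩
        nlinarith [abs_nonneg (Real.cos x)]
      have h2 : |θ t * (Real.sin x * Real.sin x)| ≤ M := by
        rw [abs_mul]
        have h3 : |Real.sin x * Real.sin x| ≤ 1 := by
          rw [abs_mul]
          have := abs_le.2 ⟨Real.neg_one_le_sin x, Real.sin_le_one x⟩
          nlinarith [abs_nonneg (Real.sin x)]
        nlinarith [abs_nonneg (θ t)]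
      calc |Real.cos x * Real.cos x + θ t * (Real.sin x * Real.sin x)|
          ≤ |Real.cos x * Real.cos x| + |θ t * (Real.sin x * Real.sin x)| := abs_add_le _ _
        _ ≤ M + 1 := by linarith
    · have : max (a - 0) (0 - -a) = a := by
        rw [sub_zero, zero_sub, neg_neg, max_self]
      show ((M+1).toNNReal : ℝ) * max (a - 0) (0 - -a) ≤ (((M+1)*a).toNNReal : ℝ) - ((0:NNReal):ℝ)
      rw [this, Real.coe_toNNReal _ (by linarith : (0:ℝ) ≤ M + 1),
        Real.coe_toNNReal _ (by positivity : (0:ℝ) ≤ (M + 1) * a), NNReal.coe_zero, sub_zero]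
  obtain ⟨φ, h0, hd⟩ := hpl.exists_eq_forall_mem_Icc_hasDerivWithinAt₀
  exact ⟨φ, h0, fun t ht =>
    (hd t (Ioo_subset_Icc_self ht)).hasDerivAt (Icc_mem_nhds ht.1 ht.2)⟩

lemma exists_phase_global (hθc : Continuous θ) (φ0 : ℝ) :
    ∃ φ : ℝ → ℝ, φ 0 = φ0 ∧ ∀ t, HasDerivAt φ (F θ t (φ t)) t := by
  choose sol h0 hsol using exists_phase hθc φ0
  -- compatibility between sol m and sol n
  have key : ∀ m n : ℕ, ∀ t : ℝ, |t| < (m:ℝ) + 1 → |t| < (n:ℝ) + 1 →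
      sol m t = sol n t := by
    intro m n t htm htn
    set c : ℝ := (min m n : ℕ) + 1 with hc
    have hc0 : (0:ℝ) < c := by positivity
    -- clamped vector field
    set v : ℝ → ℝ → ℝ := fun s x => F θ (max (-c) (min c s)) x with hv
    obtain ⟨M0, hM0⟩ := (isCompact_Icc (a := -c) (b := c)).exists_bound_of_continuousOn
      hθc.continuousOn
    set M : ℝ := max M0 0 with hM
    have hMnn : 0 ≤ M := le_max_right _ _
    have hlip : ∀ s : ℝ, LipschitzOnWith (M+1).toNNReal (v s) univ := by
      intro s
      rw [lipschitzOnWith_univ]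
      apply lipschitz_F hMnn
      apply (hM0 _ _).trans (le_max_left _ _)
      constructor
      · exact le_max_left _ _
      · exact max_le (by linarith) (min_le_left _ _)
    have hmem : ∀ k : ℕ, (min m n : ℝ) ≤ (k:ℝ) → ∀ s ∈ Ioo (-c) c,
        HasDerivAt (sol k) (v s (sol k s)) s := by
      intro k hk s hs
      have hsub : s ∈ Ioo (-(k:ℝ)-1) ((k:ℝ)+1) := by
        have h1 : c ≤ (k:ℝ) + 1 := by
          rw [hc]; push_cast; linarith
        constructor
        · have := hs.1; linarith
        · have := hs.2; linarith
      have hclamp : max (-c) (min c s) = s := by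
        rw [min_eq_right (le_of_lt hs.2), max_eq_right (le_of_lt hs.1)]
      have := hsol k s (by
        constructor
        · have := hsub.1; linarith
        · exact hsub.2)
      rw [hv]; simpa [hclamp] using this
    have hmn : (min m n : ℝ) ≤ (m:ℝ) := by exact_mod_cast Nat.cast_le.2 (min_le_left m n)
    have hnn : (min m n : ℝ) ≤ (n:ℝ) := by exact_mod_cast Nat.cast_le.2 (min_le_right m n)
    have heq := ODE_solution_unique_of_mem_Ioo (s := fun _ => univ) (K := (M+1).toNNReal)
      (f := sol m) (g := sol n) (a := -c) (b := c) (t₀ := 0)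
      (fun s _ => hlip s) ⟨by linarith, by linarith⟩
      (fun s hs => ⟨hmem m hmn s hs, mem_univ _⟩)
      (fun s hs => ⟨hmem n hnn s hs, mem_univ _⟩)
      (by rw [h0, h0])
    apply heq
    constructor
    · have h1 : (min m n : ℝ) + 1 ≤ (m:ℝ)+1 := by linarith
      have h2 : (min m n : ℝ) + 1 ≤ (n:ℝ)+1 := by linarith
      have hmin : |t| < c := by
        rw [hc]
        rcases le_total (m:ℕ) n with h | h
        · rw [min_eq_left h]; push_cast; exact htm
        · rw [min_eq_right h]; push_cast; exact htn
      have := abs_lt.1 hmin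
      linarith [this.1]
    · have hmin : |t| < c := by
        rw [hc]
        rcases le_total (m:ℕ) n with h | h
        · rw [min_eq_left h]; push_cast; exact htm
        · rw [min_eq_right h]; push_cast; exact htn
      exact (abs_lt.1 hmin).2
  refine ⟨fun t => sol ⌈|t|⌉₊ t, ?_, ?_⟩
  · simp [h0]
  · intro t
    set n : ℕ := ⌈|t|⌉₊ with hn
    have hev : (fun s => sol ⌈|s|⌉₊ s) =ᶠ[nhds t] sol n := by
      have hlt : |t| < (n:ℝ)+1 := by
        have := Nat.le_ceil |t|; rw [hn]; linarith
      have hlt' := abs_lt.1 hlt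
      have hopen : Ioo (-(n:ℝ)-1) ((n:ℝ)+1) ∈ nhds t := by
        apply Ioo_mem_nhds <;> linarith [hlt'.1, hlt'.2]
      filter_upwards [hopen] with s hs
      apply key
      · have := Nat.le_ceil |s|; linarith
      · rw [abs_lt]; exact ⟨by linarith [hs.1], hs.2⟩
    have hd := hsol n t (by
      have h1 : |t| < (n:ℝ)+1 := by rw [hn]; have := Nat.le_ceil |t|; linarith
      have h2 := abs_lt.1 h1
      exact ⟨by linarith [h2.1], h2.2⟩)
    have := hd.congr_of_eventuallyEq hev
    rwa [show sol ⌈|t|⌉₊ t = sol n t from rfl] at this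

end Stmt10
end

namespace Stmt10
open Set Filter

/-- Smoothness bootstrap for ODE solutions. -/
lemma bootstrap {f g : ℝ → ℝ} (hd : ∀ t, HasDerivAt f (g t) t)
    (hg : ∀ m : ℕ, ContDiff ℝ m f → ContDiff ℝ m g) :
    ContDiff ℝ (⊤:ℕ∞) f := by
  have hdiff : Differentiable ℝ f := fun t => (hd t).differentiableAt
  have hderiv : deriv f = g := funext fun t => (hd t).deriv
  rw [contDiff_infty]
  intro m
  induction m with
  | zero => exact contDiff_zero.2 hdiff.continuous
  | succ k ih =>
    rw [show ((k+1:ℕ) : WithTop ℕ∞) = (k : WithTop ℕ∞) + 1 from by push_cast; rfl]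
    refine contDiff_succ_iff_deriv.2 ⟨hdiff, by simp, ?_⟩
    rw [hderiv]; exact hg k ih

lemma smooth_deriv {f : ℝ → ℝ} (hf : ContDiff ℝ (⊤:ℕ∞) f) :
    ContDiff ℝ (⊤:ℕ∞) (deriv f) := by
  have := hf.iterate_deriv 1
  simpa using this

variable {θ : ℝ → ℝ}

lemma coe_le_coe_top (m : ℕ) : (m : WithTop ℕ∞) ≤ ((⊤:ℕ∞) : WithTop ℕ∞) := by
  exact_mod_cast le_top

lemma exists_sol (hθ : ContDiff ℝ (⊤:ℕ∞) θ) (φ0 : ℝ) :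
    ∃ f : ℝ → ℝ, IsSolution θ f ∧ f 0 = Real.sin φ0 ∧ deriv f 0 = Real.cos φ0 := by
  obtain ⟨φ, hφ0, hφ⟩ := exists_phase_global hθ.continuous φ0
  have hφs : ContDiff ℝ (⊤:ℕ∞) φ := by
    apply bootstrap hφ
    intro m hm
    exact ((Real.contDiff_cos.of_le le_top).comp hm).mul
        ((Real.contDiff_cos.of_le le_top).comp hm) |>.add
      (((hθ.of_le (coe_le_coe_top m))).mul
        (((Real.contDiff_sin.of_le le_top).comp hm).mul
          ((Real.contDiff_sin.of_le le_top).comp hm)))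
  set g : ℝ → ℝ := fun t => (1 - θ t) * (Real.sin (φ t) * Real.cos (φ t)) with hgdef
  have hgs : ContDiff ℝ (⊤:ℕ∞) g := by
    exact ((contDiff_const.sub hθ)).mul
      (((Real.contDiff_sin.of_le le_top).comp hφs).mul
        ((Real.contDiff_cos.of_le le_top).comp hφs))
  have hgc : Continuous g := hgs.continuous
  set G : ℝ → ℝ := fun t => ∫ s in (0:ℝ)..t, g s with hGdef
  have hG : ∀ t, HasDerivAt G (g t) t := fun t =>
    intervalIntegral.integral_hasDerivAt_right (hgc.intervalIntegrable _ _)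
      (hgc.stronglyMeasurableAtFilter _ _) hgc.continuousAt
  have hGs : ContDiff ℝ (⊤:ℕ∞) G := bootstrap hG (fun m _ => hgs.of_le (coe_le_coe_top m))
  set ρ : ℝ → ℝ := fun t => Real.exp (G t) with hρdef
  have hρ : ∀ t, HasDerivAt ρ (ρ t * g t) t := fun t => (hG t).exp
  have hρs : ContDiff ℝ (⊤:ℕ∞) ρ := (Real.contDiff_exp.of_le le_top).comp hGs
  set f : ℝ → ℝ := fun t => ρ t * Real.sin (φ t) with hfdef
  have pyth : ∀ t, Real.sin (φ t) ^ 2 + Real.cos (φ t) ^ 2 = 1 :=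
    fun t => Real.sin_sq_add_cos_sq _
  have hf' : ∀ t, HasDerivAt f (ρ t * Real.cos (φ t)) t := by
    intro t
    have h1 : HasDerivAt (fun t => Real.sin (φ t)) (Real.cos (φ t) * F θ t (φ t)) t :=
      (hφ t).sin
    have h2 := (hρ t).mul h1
    convert h2 using 1 <;> try rfl
    have hp := pyth t
    simp only [hgdef, F]
    linear_combination (-(ρ t * Real.cos (φ t))) * hp
  have hfs : ContDiff ℝ (⊤:ℕ∞) f :=
    hρs.mul ((Real.contDiff_sin.of_le le_top).comp hφs)
  have hder : deriv f = fun t => ρ t * Real.cos (φ t) :=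
    funext fun t => (hf' t).deriv
  have hf'' : ∀ t, HasDerivAt (deriv f) (-(θ t * f t)) t := by
    intro t
    rw [hder]
    have h1 : HasDerivAt (fun t => Real.cos (φ t)) (-Real.sin (φ t) * F θ t (φ t)) t :=
      (hφ t).cos
    have h2 := (hρ t).mul h1
    convert h2 using 1 <;> try rfl
    have hp := pyth t
    simp only [hgdef, hfdef, F]
    linear_combination (θ t * ρ t * Real.sin (φ t)) * hp
  refine ⟨f, ⟨hfs, fun t => by rw [(hf'' t).deriv]; ring⟩, ?_, ?_⟩
  · have : G 0 = 0 := intervalIntegral.integral_same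
    simp [hfdef, hρdef, hφ0, this]
  · have : G 0 = 0 := intervalIntegral.integral_same
    rw [hder]
    simp [hρdef, hφ0, this]

lemma exists_fundPair (hθ : ContDiff ℝ (⊤:ℕ∞) θ) :
    ∃ f₁ f₂ : ℝ → ℝ, IsFundPair θ 0 f₁ f₂ := by
  obtain ⟨f₁, h1, h10, h11⟩ := exists_sol hθ (Real.pi/2)
  obtain ⟨f₂, h2, h20, h21⟩ := exists_sol hθ 0
  refine ⟨f₁, f₂, h1, h2, ?_, ?_, ?_, ?_⟩
  · rw [h10, Real.sin_pi_div_two]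
  · rw [h11, Real.cos_pi_div_two]
  · rw [h20, Real.sin_zero]
  · rw [h21, Real.cos_zero]

end Stmt10

namespace Stmt10
open Set Filter

variable {θ : ℝ → ℝ}

lemma hasDerivAt_of_smooth {f : ℝ → ℝ} (hf : ContDiff ℝ (⊤:ℕ∞) f) (t : ℝ) :
    HasDerivAt f (deriv f t) t :=
  ((hf.differentiable (by simp)) t).hasDerivAt

lemma hasDerivAt_deriv_of_smooth {f : ℝ → ℝ} (hf : ContDiff ℝ (⊤:ℕ∞) f) (t : ℝ) :
    HasDerivAt (deriv f) (deriv (deriv f) t) t :=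
  (((smooth_deriv hf).differentiable (by simp)) t).hasDerivAt

lemma wronskian_const {f₁ f₂ : ℝ → ℝ} (h1 : IsSolution θ f₁) (h2 : IsSolution θ f₂) (x : ℝ) :
    f₁ x * deriv f₂ x - deriv f₁ x * f₂ x = f₁ 0 * deriv f₂ 0 - deriv f₁ 0 * f₂ 0 := by
  have hW : ∀ t, HasDerivAt (fun t => f₁ t * deriv f₂ t - deriv f₁ t * f₂ t) 0 t := by
    intro t
    have d1 := hasDerivAt_of_smooth h1.1 t
    have d2 := hasDerivAt_of_smooth h2.1 t
    have d1' := hasDerivAt_deriv_of_smooth h1.1 t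
    have d2' := hasDerivAt_deriv_of_smooth h2.1 t
    have h := (d1.mul d2').sub (d1'.mul d2)
    convert h using 1 <;> try rfl
    have e1 : deriv (deriv f₁) t = -(θ t * f₁ t) := by have := h1.2 t; linarith
    have e2 : deriv (deriv f₂) t = -(θ t * f₂ t) := by have := h2.2 t; linarith
    rw [e1, e2]; ring
  exact is_const_of_deriv_eq_zero (fun t => (hW t).differentiableAt)
    (fun t => (hW t).deriv) x 0

lemma isSolution_comb {f₁ f₂ : ℝ → ℝ} (h1 : IsSolution θ f₁) (h2 : IsSolution θ f₂)
    (a b : ℝ) :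
    IsSolution θ (fun t => a * f₁ t + b * f₂ t) ∧
      deriv (fun t => a * f₁ t + b * f₂ t) = fun t => a * deriv f₁ t + b * deriv f₂ t := by
  have hd : ∀ t, HasDerivAt (fun t => a * f₁ t + b * f₂ t)
      (a * deriv f₁ t + b * deriv f₂ t) t := fun t =>
    ((hasDerivAt_of_smooth h1.1 t).const_mul a).add
      ((hasDerivAt_of_smooth h2.1 t).const_mul b)
  have hder : deriv (fun t => a * f₁ t + b * f₂ t)
      = fun t => a * deriv f₁ t + b * deriv f₂ t := funext fun t => (hd t).deriv
  have hd2 : ∀ t, HasDerivAt (fun t => a * deriv f₁ t + b * deriv f₂ t)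
      (a * deriv (deriv f₁) t + b * deriv (deriv f₂) t) t := fun t =>
    ((hasDerivAt_deriv_of_smooth h1.1 t).const_mul a).add
      ((hasDerivAt_deriv_of_smooth h2.1 t).const_mul b)
  refine ⟨⟨(contDiff_const.mul h1.1).add (contDiff_const.mul h2.1), ?_⟩, hder⟩
  intro t
  rw [hder, (hd2 t).deriv]
  have e1 := h1.2 t
  have e2 := h2.2 t
  linear_combination a * e1 + b * e2

lemma fundPair_at {f₁ f₂ : ℝ → ℝ} (h1 : IsSolution θ f₁) (h2 : IsSolution θ f₂)
    (hW : ∀ t, f₁ t * deriv f₂ t - deriv f₁ t * f₂ t = 1) (x : ℝ) :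
    IsFundPair θ x (fun t => deriv f₂ x * f₁ t + (-(deriv f₁ x)) * f₂ t)
      (fun t => (-(f₂ x)) * f₁ t + f₁ x * f₂ t) := by
  obtain ⟨hs1, hder1⟩ := isSolution_comb h1 h2 (deriv f₂ x) (-(deriv f₁ x))
  obtain ⟨hs2, hder2⟩ := isSolution_comb h1 h2 (-(f₂ x)) (f₁ x)
  refine ⟨hs1, hs2, ?_, ?_, ?_, ?_⟩
  · have := hW x; linear_combination this
  · rw [hder1]; ring
  · ring
  · rw [hder2]; have := hW x; linear_combination this

end Stmt10

namespace Stmt10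
open Set Filter

noncomputable def pd : ℕ → ((ℝ×ℝ) → ℝ) → ((ℝ×ℝ) → ℝ)
  | 0, G => G
  | n+1, G => fun p => fderiv ℝ (pd n G) p (0,1)

lemma pd_succ (n : ℕ) (G : (ℝ×ℝ) → ℝ) (p : ℝ×ℝ) :
    pd (n+1) G p = fderiv ℝ (pd n G) p (0,1) := rfl

lemma infty_add_one_le : ((⊤:ℕ∞) : WithTop ℕ∞) + 1 ≤ ((⊤:ℕ∞) : WithTop ℕ∞) := by
  exact_mod_cast le_refl _

variable {U : Set (ℝ×ℝ)} {G G' : (ℝ×ℝ) → ℝ}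

lemma pd_contDiffOn (hU : IsOpen U) (hG : ContDiffOn ℝ (⊤:ℕ∞) G U) :
    ∀ n, ContDiffOn ℝ (⊤:ℕ∞) (pd n G) U
  | 0 => hG
  | (n+1) => ((pd_contDiffOn hU hG n).fderiv_of_isOpen hU infty_add_one_le).clm_apply
      contDiffOn_const

lemma pd_differentiableAt (hU : IsOpen U) (hG : ContDiffOn ℝ (⊤:ℕ∞) G U) (n : ℕ)
    {p : ℝ×ℝ} (hp : p ∈ U) : DifferentiableAt ℝ (pd n G) p :=
  ((pd_contDiffOn hU hG n).contDiffAt (hU.mem_nhds hp)).differentiableAt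
    (by simp)

lemma hasDerivAt_slice {V : (ℝ×ℝ) → ℝ} {p : ℝ×ℝ} (hd : DifferentiableAt ℝ V p) :
    HasDerivAt (fun t => V (p.1, t)) (fderiv ℝ V p (0,1)) p.2 := by
  have h := hd.hasFDerivAt.comp_hasDerivAt p.2
    ((hasDerivAt_const p.2 p.1).prodMk (hasDerivAt_id p.2))
  exact h

lemma hasDerivAt_slice1 {V : (ℝ×ℝ) → ℝ} {p : ℝ×ℝ} (hd : DifferentiableAt ℝ V p) :
    HasDerivAt (fun s => V (s, p.2)) (fderiv ℝ V p (1,0)) p.1 := by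
  have h := hd.hasFDerivAt.comp_hasDerivAt p.1
    ((hasDerivAt_id p.1).prodMk (hasDerivAt_const p.1 p.2))
  exact h

lemma pd_eq_iteratedDeriv (hU : IsOpen U) (hG : ContDiffOn ℝ (⊤:ℕ∞) G U) :
    ∀ n, ∀ p ∈ U, pd n G p = iteratedDeriv n (fun t => G (p.1, t)) p.2 := by
  intro n
  induction n with
  | zero => intro p _; rfl
  | succ n ih =>
    intro p hp
    have hnbhd : ∀ᶠ t in nhds p.2, (p.1, t) ∈ U :=
      (Continuous.prodMk_right p.1).continuousAt.preimage_mem_nhds (hU.mem_nhds hp)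
    have heq : (fun t => iteratedDeriv n (fun t' => G (p.1, t')) t)
        =ᶠ[nhds p.2] fun t => pd n G (p.1, t) := by
      filter_upwards [hnbhd] with t ht using (ih (p.1, t) ht).symm
    rw [pd_succ, iteratedDeriv_succ, heq.deriv_eq]
    exact (hasDerivAt_slice (pd_differentiableAt hU hG n hp)).deriv.symm

lemma pd_fst (hU : IsOpen U) (hG : ContDiffOn ℝ (⊤:ℕ∞) G U)
    (hG' : ContDiffOn ℝ (⊤:ℕ∞) G' U)
    (hGG' : ∀ p ∈ U, fderiv ℝ G p (1,0) = G' p) :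
    ∀ n, ∀ p ∈ U, fderiv ℝ (pd n G) p (1,0) = pd n G' p := by
  intro n
  induction n with
  | zero => exact hGG'
  | succ n ih =>
    intro p hp
    have hV : ContDiffOn ℝ (⊤:ℕ∞) (pd n G) U := pd_contDiffOn hU hG n
    have hVf : ContDiffOn ℝ (⊤:ℕ∞) (fderiv ℝ (pd n G)) U :=
      hV.fderiv_of_isOpen hU infty_add_one_le
    have hd2 : DifferentiableAt ℝ (fderiv ℝ (pd n G)) p :=
      (hVf.contDiffAt (hU.mem_nhds hp)).differentiableAt (by simp)
    have hsymm : IsSymmSndFDerivAt ℝ (pd n G) p :=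
      (hV.contDiffAt (hU.mem_nhds hp)).isSymmSndFDerivAt
        (le_trans (by simp) (WithTop.coe_le_coe.2 (le_top : (2:ℕ∞) ≤ ⊤)))
    have key : ∀ v w : ℝ×ℝ, fderiv ℝ (fun q => fderiv ℝ (pd n G) q v) p w
        = fderiv ℝ (fderiv ℝ (pd n G)) p w v := by
      intro v w
      have h : HasFDerivAt (fun q => fderiv ℝ (pd n G) q v)
          ((ContinuousLinearMap.apply ℝ ℝ v).comp (fderiv ℝ (fderiv ℝ (pd n G)) p)) p :=
        (ContinuousLinearMap.apply ℝ ℝ v).hasFDerivAt.comp p hd2.hasFDerivAt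
      rw [h.fderiv]; rfl
    have e4 : fderiv ℝ (fun q => fderiv ℝ (pd n G) q (1,0)) p = fderiv ℝ (pd n G') p := by
      apply Filter.EventuallyEq.fderiv_eq
      filter_upwards [hU.mem_nhds hp] with q hq using ih q hq
    calc fderiv ℝ (pd (n+1) G) p (1,0)
        = fderiv ℝ (fderiv ℝ (pd n G)) p (1,0) (0,1) := key (0,1) (1,0)
      _ = fderiv ℝ (fderiv ℝ (pd n G)) p (0,1) (1,0) := hsymm (1,0) (0,1)
      _ = fderiv ℝ (fun q => fderiv ℝ (pd n G) q (1,0)) p (0,1) := (key (1,0) (0,1)).symm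
      _ = fderiv ℝ (pd n G') p (0,1) := by rw [e4]
      _ = pd (n+1) G' p := rfl

lemma iteratedDeriv_congr_nhds {f g : ℝ → ℝ} {x : ℝ} (h : f =ᶠ[nhds x] g) (n : ℕ) :
    iteratedDeriv n f x = iteratedDeriv n g x := by
  have hh : ∀ n, iteratedDeriv n f =ᶠ[nhds x] iteratedDeriv n g := by
    intro n
    induction n with
    | zero => simpa [iteratedDeriv_zero] using h
    | succ n ih => rw [iteratedDeriv_succ, iteratedDeriv_succ]; exact ih.deriv
  exact (hh n).eq_of_nhds

lemma exists_smooth_extension {s : Set ℝ} {f : ℝ → ℝ} {x : ℝ} (hs : IsOpen s) (hx : x ∈ s)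
    (hf : ContDiffOn ℝ (⊤:ℕ∞) f s) :
    ∃ g : ℝ → ℝ, ContDiff ℝ (⊤:ℕ∞) g ∧ g =ᶠ[nhds x] f := by
  obtain ⟨ε, hε, hball⟩ := Metric.isOpen_iff.1 hs x hx
  have h4 : (0:ℝ) < ε/4 := by linarith
  have h2 : ε/4 < ε/2 := by linarith
  let χ : ContDiffBump x := ⟨ε/4, ε/2, h4, h2⟩
  refine ⟨fun y => χ y * f y, ?_, ?_⟩
  · rw [contDiff_iff_contDiffAt]
    intro y
    by_cases hy : y ∈ s
    · exact (χ.contDiff (n := ⊤)).contDiffAt.mul (hf.contDiffAt (hs.mem_nhds hy))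
    · have hyn : y ∉ tsupport (χ : ℝ → ℝ) := by
        rw [χ.tsupport_eq]
        intro hmem
        apply hy
        apply hball
        have : dist y x ≤ ε/2 := Metric.mem_closedBall.1 hmem
        exact Metric.mem_ball.2 (lt_of_le_of_lt this (by linarith))
      apply (contDiffAt_const (c := (0:ℝ))).congr_of_eventuallyEq
      filter_upwards [(isOpen_compl_iff.2 (isClosed_tsupport _)).mem_nhds hyn] with z hz
      rw [image_eq_zero_of_notMem_tsupport hz, zero_mul]
  · filter_upwards [Metric.closedBall_mem_nhds x h4] with y hy
    rw [χ.one_of_mem_closedBall hy, one_mul]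

lemma leibniz {f g : ℝ → ℝ} (hf : ContDiff ℝ (⊤:ℕ∞) f) (hg : ContDiff ℝ (⊤:ℕ∞) g) :
    ∀ (n : ℕ) (x : ℝ), iteratedDeriv n (fun t => f t * g t) x
      = ∑ k ∈ Finset.range (n+1),
          (n.choose k : ℝ) * (iteratedDeriv k f x * iteratedDeriv (n-k) g x) := by
  intro n
  induction n with
  | zero => intro x; simp
  | succ n ih =>
    intro x
    have hdf : ∀ k : ℕ, DifferentiableAt ℝ (iteratedDeriv k f) x := fun k =>
      (hf.differentiable_iteratedDeriv k (by exact_mod_cast ENat.coe_lt_top k)).differentiableAt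
    have hdg : ∀ k : ℕ, DifferentiableAt ℝ (iteratedDeriv k g) x := fun k =>
      (hg.differentiable_iteratedDeriv k (by exact_mod_cast ENat.coe_lt_top k)).differentiableAt
    rw [iteratedDeriv_succ, funext ih]
    rw [deriv_fun_sum (A := fun k y => (n.choose k : ℝ) * (iteratedDeriv k f y * iteratedDeriv (n-k) g y))
      (fun k _ => ((hdf k).mul (hdg (n-k))).const_mul _)]
    have hterm : ∀ k ∈ Finset.range (n+1),
        deriv (fun y => (n.choose k : ℝ) * (iteratedDeriv k f y * iteratedDeriv (n-k) g y)) x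
        = (n.choose k : ℝ) * (iteratedDeriv (k+1) f x * iteratedDeriv (n-k) g x)
          + (n.choose k : ℝ) * (iteratedDeriv k f x * iteratedDeriv (n-k+1) g x) := by
      intro k _
      rw [deriv_const_mul (d := fun y => iteratedDeriv k f y * iteratedDeriv (n-k) g y) _
        ((hdf k).mul (hdg (n-k))), deriv_fun_mul (hdf k) (hdg (n-k)),
        ← iteratedDeriv_succ, ← iteratedDeriv_succ]
      ring
    rw [Finset.sum_congr rfl hterm, Finset.sum_add_distrib]
    have hswap : (∑ k ∈ Finset.range (n+1),
          (n.choose k : ℝ) * (iteratedDeriv k f x * iteratedDeriv (n-k+1) g x))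
        = ∑ k ∈ Finset.range (n+1),
          (n.choose k : ℝ) * (iteratedDeriv k f x * iteratedDeriv (n+1-k) g x) :=
      Finset.sum_congr rfl (fun k hk => by
        rw [show n-k+1 = n+1-k from by have := Finset.mem_range.1 hk; omega])
    rw [hswap, Finset.sum_choose_succ_mul
      (fun i j => iteratedDeriv i f x * iteratedDeriv j g x) n]
    exact add_comm _ _

end Stmt10

noncomputable section
namespace Stmt10
open Set Filter

theorem main (θ : ℝ → ℝ) (hθ : ContDiff ℝ (⊤ : ℕ∞) θ)
    (S : ℕ → ℝ → ℝ)
    (hS : ∀ (n : ℕ) (x : ℝ) (f₁ f₂ : ℝ → ℝ), IsFundPair θ x f₁ f₂ →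
      S n x = iteratedDeriv n (fun t => f₂ t / f₁ t) x) :
    (∀ n : ℕ, 1 ≤ n → ContDiff ℝ (⊤ : ℕ∞) (S n)) ∧
    (∀ n : ℕ, 1 ≤ n → ∀ x : ℝ,
      S (n + 1) x = deriv (S n) x +
        θ x * ∑ k ∈ Finset.Ico 1 n, (n.choose k : ℝ) * S k x * S (n - k) x) := by
  classical
  obtain ⟨f₁, f₂, hpair0⟩ := exists_fundPair hθ
  obtain ⟨hs1, hs2, h10, h11, h20, h21⟩ := hpair0
  have hW : ∀ t, f₁ t * deriv f₂ t - deriv f₁ t * f₂ t = 1 := by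
    intro t
    rw [wronskian_const hs1 hs2 t, h10, h11, h20, h21]; ring
  set N : ℝ×ℝ → ℝ := fun p => f₁ p.1 * f₂ p.2 - f₂ p.1 * f₁ p.2 with hN
  set D : ℝ×ℝ → ℝ := fun p => deriv f₂ p.1 * f₁ p.2 - deriv f₁ p.1 * f₂ p.2 with hD
  set u : ℝ×ℝ → ℝ := fun p => N p / D p with hu
  set U : Set (ℝ×ℝ) := {p | D p ≠ 0} with hUdef
  have hf1s := hs1.1
  have hf2s := hs2.1
  have hf1d := smooth_deriv hf1s
  have hf2d := smooth_deriv hf2s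
  have hNs : ContDiff ℝ (⊤:ℕ∞) N :=
    ((hf1s.comp contDiff_fst).mul (hf2s.comp contDiff_snd)).sub
      ((hf2s.comp contDiff_fst).mul (hf1s.comp contDiff_snd))
  have hDs : ContDiff ℝ (⊤:ℕ∞) D :=
    ((hf2d.comp contDiff_fst).mul (hf1s.comp contDiff_snd)).sub
      ((hf1d.comp contDiff_fst).mul (hf2s.comp contDiff_snd))
  have hUopen : IsOpen U := isOpen_compl_singleton.preimage hDs.continuous
  have hus : ContDiffOn ℝ (⊤:ℕ∞) u U :=
    hNs.contDiffOn.div hDs.contDiffOn (fun p hp => hp)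
  have hdiag : ∀ x : ℝ, ((x,x) : ℝ×ℝ) ∈ U := by
    intro x
    show D (x,x) ≠ 0
    rw [show D (x,x) = 1 from by simp only [hD]; linear_combination hW x]
    exact one_ne_zero
  have key1 : ∀ (n : ℕ) (x : ℝ), S n x = pd n u (x,x) := by
    intro n x
    have hp := fundPair_at hs1 hs2 hW x
    have hSn := hS n x _ _ hp
    rw [hSn, pd_eq_iteratedDeriv hUopen hus n (x,x) (hdiag x)]
    congr 1
    funext t
    show ((-(f₂ x)) * f₁ t + f₁ x * f₂ t) / (deriv f₂ x * f₁ t + (-(deriv f₁ x)) * f₂ t)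
      = u (x, t)
    simp only [hu, hN, hD]
    congr 1 <;> ring
  have hSslice : ∀ (k : ℕ) (x : ℝ), S k x = iteratedDeriv k (fun t => u (x,t)) x := by
    intro k x
    rw [key1 k x, pd_eq_iteratedDeriv hUopen hus k (x,x) (hdiag x)]
  constructor
  · intro n _
    rw [contDiff_iff_contDiffAt]
    intro x
    have h1 : ContDiffAt ℝ (⊤:ℕ∞) (pd n u) (x,x) :=
      (pd_contDiffOn hUopen hus n).contDiffAt (hUopen.mem_nhds (hdiag x))
    have h2 : ContDiffAt ℝ (⊤:ℕ∞) (fun y : ℝ => ((y,y) : ℝ×ℝ)) x :=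
      contDiffAt_id.prodMk contDiffAt_id
    have h3 := ContDiffAt.comp (g := pd n u) (f := fun y : ℝ => ((y,y) : ℝ×ℝ)) x h1 h2
    apply h3.congr_of_eventuallyEq
    exact Filter.Eventually.of_forall
      (fun y => by simpa [Function.comp] using key1 n y)
  · intro n hn x
    set B : ℝ×ℝ → ℝ := fun p => -1 - θ p.1 * (u p * u p) with hB
    have hBs : ContDiffOn ℝ (⊤:ℕ∞) B U :=
      contDiffOn_const.sub (((hθ.comp contDiff_fst).contDiffOn).mul (hus.mul hus))
    have hderB : ∀ p ∈ U, fderiv ℝ u p (1,0) = B p := by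
      intro p hp
      have hdu : DifferentiableAt ℝ u p :=
        (hus.contDiffAt (hUopen.mem_nhds hp)).differentiableAt (by simp)
      have hslice := hasDerivAt_slice1 hdu
      have hNd : HasDerivAt (fun s => N (s, p.2))
          (deriv f₁ p.1 * f₂ p.2 - deriv f₂ p.1 * f₁ p.2) p.1 := by
        simp only [hN]
        exact ((hasDerivAt_of_smooth hf1s p.1).mul_const _).sub
          ((hasDerivAt_of_smooth hf2s p.1).mul_const _)
      have hDd : HasDerivAt (fun s => D (s, p.2))
          (deriv (deriv f₂) p.1 * f₁ p.2 - deriv (deriv f₁) p.1 * f₂ p.2) p.1 := by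
        simp only [hD]
        exact ((hasDerivAt_deriv_of_smooth hf2s p.1).mul_const _).sub
          ((hasDerivAt_deriv_of_smooth hf1s p.1).mul_const _)
      have hquot := hNd.div hDd hp
      have huniq := hslice.unique hquot
      rw [huniq, hB, hu]
      have e1 : deriv (deriv f₁) p.1 = -(θ p.1 * f₁ p.1) := by
        have := hs1.2 p.1; linarith
      have e2 : deriv (deriv f₂) p.1 = -(θ p.1 * f₂ p.1) := by
        have := hs2.2 p.1; linarith
      rw [e1, e2]
      have hDp : D p ≠ 0 := hp
      field_simp
      simp only [hN, hD]
      ring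
    have hfst : fderiv ℝ (pd n u) (x,x) (1,0) = pd n B (x,x) :=
      pd_fst hUopen hus hBs hderB n (x,x) (hdiag x)
    have hpdB : pd n B (x,x) = iteratedDeriv n (fun t => B (x,t)) x :=
      pd_eq_iteratedDeriv hUopen hBs n (x,x) (hdiag x)
    have hchain : HasDerivAt (S n) (fderiv ℝ (pd n u) (x,x) (1,1)) x := by
      have hdp : DifferentiableAt ℝ (pd n u) (x,x) :=
        pd_differentiableAt hUopen hus n (hdiag x)
      have hdiagmap : HasDerivAt (fun y : ℝ => ((y,y) : ℝ×ℝ)) ((1,1) : ℝ×ℝ) x := by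
        simpa using ((hasDerivAt_id x).prodMk (hasDerivAt_id x))
      have h := HasFDerivAt.comp_hasDerivAt (f := fun y : ℝ => ((y,y) : ℝ×ℝ)) x hdp.hasFDerivAt hdiagmap
      have heq : (fun y : ℝ => pd n u (y,y)) = S n := funext fun y => (key1 n y).symm
      rw [← heq]
      exact h
    have hderS : deriv (S n) x
        = fderiv ℝ (pd n u) (x,x) (1,0) + fderiv ℝ (pd n u) (x,x) (0,1) := by
      rw [hchain.deriv,
        show ((1,1) : ℝ×ℝ) = ((1,0) : ℝ×ℝ) + ((0,1) : ℝ×ℝ) from by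
          rw [Prod.mk_add_mk]; norm_num,
        ContinuousLinearMap.map_add]
    have hSn1 : S (n+1) x = fderiv ℝ (pd n u) (x,x) (0,1) := by
      rw [key1 (n+1) x]; rfl
    -- smooth extension of the slice at x
    have hsliceopen : IsOpen {t : ℝ | ((x,t) : ℝ×ℝ) ∈ U} :=
      hUopen.preimage (Continuous.prodMk_right x)
    have hslice_cd : ContDiffOn ℝ (⊤:ℕ∞) (fun t => u (x,t)) {t : ℝ | ((x,t) : ℝ×ℝ) ∈ U} :=
      hus.comp ((contDiff_const.prodMk contDiff_id).contDiffOn) (fun t ht => ht)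
    obtain ⟨q, hqs, hq⟩ := exists_smooth_extension hsliceopen (hdiag x) hslice_cd
    have hqk : ∀ k, iteratedDeriv k (fun t => u (x,t)) x = iteratedDeriv k q x :=
      fun k => (iteratedDeriv_congr_nhds hq k).symm
    have hBq : (fun t => B (x,t)) =ᶠ[nhds x]
        (fun t => (-1 : ℝ) + (-(θ x)) * (q t * q t)) := by
      filter_upwards [hq] with t ht
      simp only [hB]
      rw [ht]
      ring
    have hqq : ContDiff ℝ (⊤:ℕ∞) (fun t => q t * q t) := hqs.mul hqs
    have hitB : iteratedDeriv n (fun t => B (x,t)) x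
        = -(θ x) * iteratedDeriv n (fun t => q t * q t) x := by
      rw [iteratedDeriv_congr_nhds hBq n]
      rw [← iteratedDerivWithin_univ, ← iteratedDerivWithin_univ]
      rw [iteratedDerivWithin_const_add hn (-1 : ℝ)]
      rw [iteratedDerivWithin_const_mul (mem_univ x) uniqueDiffOn_univ (-(θ x))
        ((hqq.of_le (coe_le_coe_top n)).contDiffWithinAt)]
    have hS0 : S 0 x = 0 := by
      rw [hSslice 0 x]
      rw [iteratedDeriv_zero]
      show u (x,x) = 0
      simp only [hu, hN]
      rw [show f₁ x * f₂ x - f₂ x * f₁ x = (0:ℝ) from by ring, zero_div]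
    have hsum : iteratedDeriv n (fun t => q t * q t) x
        = ∑ k ∈ Finset.Ico 1 n, (n.choose k : ℝ) * S k x * S (n-k) x := by
      rw [leibniz hqs hqs n x]
      have hterm : ∀ k ∈ Finset.range (n+1),
          (n.choose k : ℝ) * (iteratedDeriv k q x * iteratedDeriv (n-k) q x)
          = (n.choose k : ℝ) * S k x * S (n-k) x := by
        intro k _
        rw [← hqk k, ← hqk (n-k), ← hSslice k x, ← hSslice (n-k) x]; ring
      rw [Finset.sum_congr rfl hterm]
      obtain ⟨m, rfl⟩ : ∃ m, n = m + 1 := ⟨n - 1, by omega⟩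
      rw [Finset.sum_range_succ]
      rw [show (m + 1) - (m + 1) = 0 from by omega, hS0, mul_zero]
      rw [add_zero]
      rw [Finset.range_eq_Ico, Finset.sum_eq_sum_Ico_succ_bot (by omega : 0 < m + 1)]
      rw [hS0]
      rw [show ((m+1).choose 0 : ℝ) * 0 * S ((m+1) - 0) x = 0 from by ring, zero_add]
    have main : S (n+1) x = deriv (S n) x - pd n B (x,x) := by
      rw [hSn1, hderS, hfst]; ring
    rw [main, hpdB, hitB, hsum]
    ring

end Stmt10
end

noncomputable section

open MeasureTheory Filter

/-- If `S n x = 𝒮_n^θ(x)` for all `n, x`, then each `S n` is smooth on ℝ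
and the recursion `𝒮_{n+1} = (𝒮_n)' + θ·Σ_{k=1}^{n-1} C(n,k)·𝒮_k·𝒮_{n-k}` holds. -/
theorem stmt10 (θ : ℝ → ℝ) (hθ : ContDiff ℝ (⊤ : ℕ∞) θ)
    (S : ℕ → ℝ → ℝ)
    (hS : ∀ (n : ℕ) (x : ℝ) (f₁ f₂ : ℝ → ℝ), IsFundPair θ x f₁ f₂ →
      S n x = iteratedDeriv n (fun t => f₂ t / f₁ t) x) :
    (∀ n : ℕ, 1 ≤ n → ContDiff ℝ (⊤ : ℕ∞) (S n)) ∧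
    (∀ n : ℕ, 1 ≤ n → ∀ x : ℝ,
      S (n + 1) x = deriv (S n) x +
        θ x * ∑ k ∈ Finset.Ico 1 n, (n.choose k : ℝ) * S k x * S (n - k) x) := by
  exact Stmt10.main θ hθ S hS

end
end

section
/- Let θ : ℝ → ℝ be smooth and let R ∈ (0,∞). Then for every integer n ≥ 1 and every x ∈ ℝ, 𝒮_n^{θ,g_R}(x) = Σ_{k=1}^n s(n,k)·(π/R)^{n−k}·𝒮_k^θ(x), where s(n,k) denotes the coefficient of u^k in the polynomial ∏_{s=0}^{n−1}(u + s) (the unsigned Stirling number of the first kind). -/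
noncomputable section

open MeasureTheory Filter


open Set Polynomial in
private lemma lemA' {h : ℝ → ℝ} {S : Set ℝ} (hS : IsOpen S) (hh : ContDiffOn ℝ (⊤:ℕ∞) h S)
    (k : ℕ) {y : ℝ} (hy : y ∈ S) :
    HasDerivAt (iteratedDeriv k h) (iteratedDeriv (k+1) h y) y := by
  have hd : DifferentiableOn ℝ (iteratedDerivWithin k h S) S :=
    hh.differentiableOn_iteratedDerivWithin (by exact_mod_cast WithTop.coe_lt_top _) hS.uniqueDiffOn
  have heq : Set.EqOn (iteratedDerivWithin k h S) (iteratedDeriv k h) S := by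
    intro z hz
    rw [iteratedDerivWithin_eq_iteratedFDerivWithin, iteratedDeriv_eq_iteratedFDeriv,
      iteratedFDerivWithin_of_isOpen k hS hz]
  have hda : DifferentiableAt ℝ (iteratedDeriv k h) y := by
    have h1 : DifferentiableAt ℝ (iteratedDerivWithin k h S) y :=
      (hd y hy).differentiableAt (hS.mem_nhds hy)
    exact h1.congr_of_eventuallyEq
      (Filter.eventuallyEq_of_mem (hS.mem_nhds hy) (fun z hz => (heq hz).symm))
  have := hda.hasDerivAt
  rwa [show deriv (iteratedDeriv k h) y = iteratedDeriv (k+1) h y by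
    rw [iteratedDeriv_succ]] at this

private lemma gR_hasDerivAt {R : ℝ} (hR : 0 < R) {t : ℝ} (ht : 1 - Real.pi / R * t ≠ 0)
    (x : ℝ) : HasDerivAt (fun t => x + gR R t) (1 - Real.pi / R * t)⁻¹ t := by
  have h1 : HasDerivAt (fun t : ℝ => 1 - Real.pi / R * t) (-(Real.pi / R)) t := by
    simpa using ((hasDerivAt_id t).const_mul (Real.pi / R)).const_sub 1
  have h2 : HasDerivAt (fun t : ℝ => Real.log (1 - Real.pi / R * t))
      ((1 - Real.pi / R * t)⁻¹ * -(Real.pi / R)) t := by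
    simpa [Function.comp_def] using (Real.hasDerivAt_log ht).comp t h1
  have h3 := (h2.const_mul (-(R / Real.pi))).const_add x
  have h4 : R / Real.pi * (Real.pi / R) = 1 := by
    have hπ : Real.pi ≠ 0 := Real.pi_ne_zero
    field_simp
  have harith : -(R / Real.pi) * ((1 - Real.pi / R * t)⁻¹ * -(Real.pi / R))
      = (1 - Real.pi / R * t)⁻¹ := by
    rw [show -(R / Real.pi) * ((1 - Real.pi / R * t)⁻¹ * -(Real.pi / R))
      = R / Real.pi * (Real.pi / R) * (1 - Real.pi / R * t)⁻¹ from by ring, h4, one_mul]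
  rw [harith] at h3
  simpa only [gR] using h3

/-- coefficient of `u^k` in `∏_{s<m} (u+s)`: unsigned Stirling numbers of the first kind. -/
private def sP (m k : ℕ) : ℝ :=
  (∏ s ∈ Finset.range m, (Polynomial.X + Polynomial.C (s : ℝ))).coeff k

private lemma sP_zero (m : ℕ) (hm : 1 ≤ m) : sP m 0 = 0 := by
  rw [sP, Polynomial.coeff_zero_eq_eval_zero, Polynomial.eval_prod]
  apply Finset.prod_eq_zero (Finset.mem_range.2 (by omega : 0 < m))
  simp

private lemma sP_top (m : ℕ) : sP m (m+1) = 0 := by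
  apply Polynomial.coeff_eq_zero_of_natDegree_lt
  calc (∏ s ∈ Finset.range m, (Polynomial.X + Polynomial.C (s : ℝ))).natDegree
      ≤ ∑ s ∈ Finset.range m,
          (Polynomial.X + Polynomial.C ((s : ℝ))).natDegree := Polynomial.natDegree_prod_le _ _
    _ ≤ ∑ _s ∈ Finset.range m, 1 := by
        refine Finset.sum_le_sum fun s _ => ?_
        rw [Polynomial.natDegree_X_add_C]
    _ = m := by simp
    _ < m + 1 := Nat.lt_succ_self m

private lemma sP_rec (m j : ℕ) :
    sP (m+1) j = ((∏ s ∈ Finset.range m, (Polynomial.X + Polynomial.C (s : ℝ))) *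
      Polynomial.X).coeff j + sP m j * (m : ℝ) := by
  simp only [sP, Finset.prod_range_succ]
  rw [show (Polynomial.X + Polynomial.C ((m : ℕ) : ℝ)) =
    (Polynomial.X + Polynomial.C ((m : ℝ))) from by norm_cast]
  rw [mul_add, Polynomial.coeff_add, Polynomial.coeff_mul_C]

theorem stmt11' (R : ℝ) (hR : 0 < R) :
    ∀ n : ℕ, 1 ≤ n → ∀ (x : ℝ) (f₁ f₂ : ℝ → ℝ), ContDiff ℝ (⊤ : ℕ∞) f₁ →
      ContDiff ℝ (⊤ : ℕ∞) f₂ → f₁ x ≠ 0 →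
      SchR R x f₁ f₂ n =
        ∑ k ∈ Finset.Icc 1 n,
          (∏ s ∈ Finset.range n, (Polynomial.X + Polynomial.C (s : ℝ))).coeff k *
            (Real.pi / R) ^ (n - k) * iteratedDeriv k (fun t => f₂ t / f₁ t) x := by
  intro n hn x f₁ f₂ hf₁s hf₂s hf₁x
  set a : ℝ := Real.pi / R with ha_def
  set h : ℝ → ℝ := fun t => f₂ t / f₁ t with hh_def
  set S : Set ℝ := {y | f₁ y ≠ 0} with hS_def
  have hSopen : IsOpen S := isOpen_ne.preimage hf₁s.continuous
  have hxS : x ∈ S := hf₁x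
  have hhS : ContDiffOn ℝ (⊤:ℕ∞) h S :=
    (hf₂s.contDiffOn).div (hf₁s.contDiffOn) (fun y hy => hy)
  set G : ℝ → ℝ := fun t => x + gR R t with hG_def
  have hG0 : G 0 = x := by simp [hG_def, gR]
  set W : Set ℝ := {t | 1 - a * t ≠ 0} with hW_def
  have hWopen : IsOpen W := isOpen_ne.preimage (by fun_prop)
  have hGderiv : ∀ t ∈ W, HasDerivAt G (1 - a * t)⁻¹ t := fun t ht => gR_hasDerivAt hR ht x
  have hGcont : ContinuousOn G W := fun t ht => (hGderiv t ht).continuousAt.continuousWithinAt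
  set U : Set ℝ := W ∩ G ⁻¹' S with hU_def
  have hUopen : IsOpen U := hGcont.isOpen_inter_preimage hWopen hSopen
  have h0U : (0:ℝ) ∈ U := by
    constructor
    · show (1 : ℝ) - a * 0 ≠ 0; norm_num
    · show G 0 ∈ S; rw [hG0]; exact hxS
  have key : ∀ m : ℕ, 1 ≤ m → ∀ t ∈ U,
      iteratedDeriv m (fun t => h (G t)) t =
      ∑ k ∈ Finset.range (m+1),
        sP m k * (a ^ (m - k) * (((1 - a * t)⁻¹) ^ m * iteratedDeriv k h (G t))) := by
    intro m hm
    induction m, hm using Nat.le_induction with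
    | base =>
      intro t htU
      have htW : t ∈ W := htU.1
      have htS : G t ∈ S := htU.2
      have hd : HasDerivAt (fun t => h (G t)) (iteratedDeriv 1 h (G t) * (1 - a * t)⁻¹) t := by
        have := (lemA' hSopen hhS 0 htS).comp t (hGderiv t htW)
        simpa [Function.comp_def, iteratedDeriv_zero] using this
      rw [iteratedDeriv_one, hd.deriv]
      rw [Finset.sum_range_succ, Finset.sum_range_one]
      have hc0 : sP 1 0 = 0 := sP_zero 1 le_rfl
      have hc1 : sP 1 1 = 1 := by
        simp [sP, Finset.prod_range_one]
      rw [hc0, hc1]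
      ring
    | succ m hm ih =>
      intro t htU
      have htW : t ∈ W := htU.1
      have htS : G t ∈ S := htU.2
      rw [iteratedDeriv_succ]
      have hev : iteratedDeriv m (fun t => h (G t)) =ᶠ[nhds t]
          (fun t => ∑ k ∈ Finset.range (m+1),
            sP m k * (a ^ (m - k) * (((1 - a * t)⁻¹) ^ m * iteratedDeriv k h (G t)))) :=
        Filter.eventuallyEq_of_mem (hUopen.mem_nhds htU) (fun z hz => ih z hz)
      rw [hev.deriv_eq]
      obtain ⟨m', rfl⟩ : ∃ m', m = m' + 1 := ⟨m - 1, by omega⟩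
      set m := m' + 1 with hm_def
      -- derivative of each summand
      have hterm : ∀ k ∈ Finset.range (m+1),
          HasDerivAt (fun t => sP m k * (a ^ (m - k) *
              (((1 - a * t)⁻¹) ^ m * iteratedDeriv k h (G t))))
            (sP m k * (a ^ (m - k) * ((m * a * ((1 - a * t)⁻¹) ^ (m+1)) * iteratedDeriv k h (G t)
              + ((1 - a * t)⁻¹) ^ (m+1) * iteratedDeriv (k+1) h (G t)))) t := by
        intro k _
        have hw : HasDerivAt (fun t : ℝ => 1 - a * t) (-a) t := by
          simpa using ((hasDerivAt_id t).const_mul a).const_sub 1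
        have hinv : HasDerivAt (fun t : ℝ => (1 - a * t)⁻¹)
            (-(-a) / (1 - a * t) ^ 2) t := hw.inv htW
        have hpow := hinv.pow m
        have hcomp : HasDerivAt (fun t => iteratedDeriv k h (G t))
            (iteratedDeriv (k+1) h (G t) * (1 - a * t)⁻¹) t := by
          have := (lemA' hSopen hhS k htS).comp t (hGderiv t htW)
          simpa [Function.comp_def] using this
        have hmul := hpow.mul hcomp
        have := (hmul.const_mul (a ^ (m - k))).const_mul (sP m k)
        convert this using 1
        all_goals try rfl
        have hne : (1 - a * t) ≠ 0 := htW
        have e2 : (m : ℝ) * ((1 - a * t)⁻¹) ^ (m - 1) * (-(-a) / (1 - a * t) ^ 2)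
            = (m : ℝ) * a * ((1 - a * t)⁻¹) ^ (m+1) := by
          show (m : ℝ) * ((1 - a * t)⁻¹) ^ m' * (-(-a) / (1 - a * t) ^ 2) = _
          rw [neg_neg, div_eq_mul_inv, ← inv_pow, hm_def]
          push_cast
          ring
        rw [e2]
        simp only [Pi.pow_apply]
        ring
      have hsum := HasDerivAt.fun_sum hterm
      rw [hsum.deriv]
      -- algebra with sums
      have e1 : ∀ k ∈ Finset.range (m+1),
          sP m k * (a ^ (m - k) * ((↑m * a * ((1 - a * t)⁻¹) ^ (m+1)) * iteratedDeriv k h (G t)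
            + ((1 - a * t)⁻¹) ^ (m+1) * iteratedDeriv (k+1) h (G t)))
          = sP m k * (m : ℝ) * (a ^ (m+1-k) * (((1 - a * t)⁻¹) ^ (m+1) * iteratedDeriv k h (G t)))
            + sP m k * (a ^ (m-k) * (((1 - a * t)⁻¹) ^ (m+1) * iteratedDeriv (k+1) h (G t))) := by
        intro k hk
        have hk' : k ≤ m := by simpa [Nat.lt_succ_iff] using hk
        have hpa : a ^ (m+1-k) = a ^ (m-k) * a := by
          rw [← pow_succ]; congr 1; omega
        rw [hpa]; ring
      calc ∑ k ∈ Finset.range (m+1),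
            sP m k * (a ^ (m - k) * ((↑m * a * ((1 - a * t)⁻¹) ^ (m+1)) * iteratedDeriv k h (G t)
              + ((1 - a * t)⁻¹) ^ (m+1) * iteratedDeriv (k+1) h (G t)))
          = (∑ k ∈ Finset.range (m+1),
              sP m k * (m : ℝ) * (a ^ (m+1-k) * (((1 - a * t)⁻¹) ^ (m+1) * iteratedDeriv k h (G t))))
            + ∑ k ∈ Finset.range (m+1),
              sP m k * (a ^ (m-k) * (((1 - a * t)⁻¹) ^ (m+1) * iteratedDeriv (k+1) h (G t))) := by
            rw [← Finset.sum_add_distrib]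
            exact Finset.sum_congr rfl e1
        _ = ∑ k ∈ Finset.range (m+1+1),
              sP (m+1) k * (a ^ (m+1-k) * (((1 - a * t)⁻¹) ^ (m+1) * iteratedDeriv k h (G t))) := by
            have s1 : ∑ k ∈ Finset.range (m+2),
                sP (m+1) k * (a ^ (m+1-k) * (((1 - a * t)⁻¹) ^ (m+1) * iteratedDeriv k h (G t)))
                = (∑ k ∈ Finset.range (m+2),
                    ((∏ s ∈ Finset.range m, (Polynomial.X + Polynomial.C (s : ℝ))) *
                      Polynomial.X).coeff k *
                      (a ^ (m+1-k) * (((1 - a * t)⁻¹) ^ (m+1) * iteratedDeriv k h (G t))))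
                  + ∑ k ∈ Finset.range (m+2),
                    sP m k * (m : ℝ) *
                      (a ^ (m+1-k) * (((1 - a * t)⁻¹) ^ (m+1) * iteratedDeriv k h (G t))) := by
              rw [← Finset.sum_add_distrib]
              exact Finset.sum_congr rfl fun j _ => by rw [sP_rec m j]; ring
            have hPX : ∑ k ∈ Finset.range (m+2),
                ((∏ s ∈ Finset.range m, (Polynomial.X + Polynomial.C (s : ℝ))) *
                  Polynomial.X).coeff k *
                  (a ^ (m+1-k) * (((1 - a * t)⁻¹) ^ (m+1) * iteratedDeriv k h (G t)))
                = ∑ k ∈ Finset.range (m+1),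
                    sP m k * (a ^ (m-k) * (((1 - a * t)⁻¹) ^ (m+1) * iteratedDeriv (k+1) h (G t))) := by
              rw [Finset.sum_range_succ']
              have h0 : ((∏ s ∈ Finset.range m, (Polynomial.X + Polynomial.C (s : ℝ))) *
                  Polynomial.X).coeff 0 = 0 := by
                rw [Polynomial.coeff_zero_eq_eval_zero]; simp
              rw [h0, zero_mul, add_zero]
              refine Finset.sum_congr rfl fun k hk => ?_
              rw [Polynomial.coeff_mul_X, show m + 1 - (k+1) = m - k from by omega]
              rfl
            have hM : ∑ k ∈ Finset.range (m+2),
                sP m k * (m : ℝ) *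
                  (a ^ (m+1-k) * (((1 - a * t)⁻¹) ^ (m+1) * iteratedDeriv k h (G t)))
                = ∑ k ∈ Finset.range (m+1),
                    sP m k * (m : ℝ) *
                      (a ^ (m+1-k) * (((1 - a * t)⁻¹) ^ (m+1) * iteratedDeriv k h (G t))) := by
              rw [Finset.sum_range_succ, sP_top m, zero_mul, zero_mul, add_zero]
            rw [show m + 1 + 1 = m + 2 from rfl, s1, hPX, hM, add_comm]
  -- conclude
  have hkey := key n hn 0 h0U
  have hF : SchR R x f₁ f₂ n = iteratedDeriv n (fun t => h (G t)) 0 := rfl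
  rw [hF, hkey, hG0]
  have hsub : Finset.Icc 1 n ⊆ Finset.range (n+1) := by
    intro k hk
    simp only [Finset.mem_Icc] at hk
    simp only [Finset.mem_range]
    omega
  rw [← Finset.sum_subset hsub]
  · refine Finset.sum_congr rfl fun k hk => ?_
    simp only [mul_zero, sub_zero, inv_one, one_pow, sP]
    ring
  · intro k hk hk2
    simp only [Finset.mem_range] at hk
    simp only [Finset.mem_Icc] at hk2
    have : k = 0 := by omega
    subst this
    rw [sP_zero n hn]
    ring


/-- `𝒮_n^{θ,g_R}(x) = Σ_{k=1}^n s(n,k)·(π/R)^{n-k}·𝒮_k^θ(x)`, where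
`s(n,k)` is the coefficient of `u^k` in `∏_{s=0}^{n-1}(u+s)` (unsigned Stirling number
of the first kind). -/
theorem stmt11 (θ : ℝ → ℝ) (hθ : ContDiff ℝ (⊤ : ℕ∞) θ) (R : ℝ) (hR : 0 < R) :
    ∀ n : ℕ, 1 ≤ n → ∀ (x : ℝ) (f₁ f₂ : ℝ → ℝ), IsFundPair θ x f₁ f₂ →
      SchR R x f₁ f₂ n =
        ∑ k ∈ Finset.Icc 1 n,
          (∏ s ∈ Finset.range n, (Polynomial.X + Polynomial.C (s : ℝ))).coeff k *
            (Real.pi / R) ^ (n - k) * iteratedDeriv k (fun t => f₂ t / f₁ t) x := by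
  intro n hn x f₁ f₂ hfp
  obtain ⟨⟨hf₁s, -⟩, ⟨hf₂s, -⟩, hf₁x, -, -, -⟩ := hfp
  exact stmt11' R hR n hn x f₁ f₂ hf₁s hf₂s (by rw [hf₁x]; norm_num)

end
end

section
/- Let f, g : ℝ → ℝ be smooth, let a, b, c, d ∈ ℝ, let t ∈ ℝ and let n ≥ 1 be an integer. Then det of the 2n×2n matrix obtained by stacking the n×2n block T(a·f + b·g, n)(t) on top of the n×2n block T(c·f + d·g, n)(t) equals (a·d − b·c)ⁿ times det of the 2n×2n matrix obtained by stacking T(f, n)(t) on top of T(g, n)(t). -/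
noncomputable section

open MeasureTheory Filter

lemma iteratedDeriv_lin (f g : ℝ → ℝ) (hf : ContDiff ℝ (⊤ : ℕ∞) f)
    (hg : ContDiff ℝ (⊤ : ℕ∞) g) (a b : ℝ) (m : ℕ) (t : ℝ) :
    iteratedDeriv m (fun s => a * f s + b * g s) t
      = a * iteratedDeriv m f t + b * iteratedDeriv m g t := by
  have hu : UniqueDiffOn ℝ (Set.univ : Set ℝ) := uniqueDiffOn_univ
  have hx : t ∈ (Set.univ : Set ℝ) := trivial
  simp only [← iteratedDerivWithin_univ]
  have hrw : (fun s => a * f s + b * g s) = ((fun s => a * f s) + fun s => b * g s) := rfl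
  rw [hrw, iteratedDerivWithin_add hx hu
      (((hf.contDiffOn.of_le (by exact_mod_cast le_top)).const_smul a |>.congr (by intro y _; simp [smul_eq_mul])) t hx)
      (((hg.contDiffOn.of_le (by exact_mod_cast le_top)).const_smul b |>.congr (by intro y _; simp [smul_eq_mul])) t hx)]
  rw [iteratedDerivWithin_const_mul hx hu a ((hf.contDiffOn.of_le (by exact_mod_cast le_top)) t hx),
      iteratedDerivWithin_const_mul hx hu b ((hg.contDiffOn.of_le (by exact_mod_cast le_top)) t hx)]

lemma Tentry_lin (f g : ℝ → ℝ) (hf : ContDiff ℝ (⊤ : ℕ∞) f)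
    (hg : ContDiff ℝ (⊤ : ℕ∞) g) (a b t : ℝ) (i j : ℕ) :
    Tentry (fun s => a * f s + b * g s) t i j
      = a * Tentry f t i j + b * Tentry g t i j := by
  unfold Tentry
  split
  · rw [iteratedDeriv_lin f g hf hg a b]; ring
  · ring

open Matrix Kronecker in
/-- The determinant of the `2n×2n` matrix stacking `T(af+bg, n)(t)` on
top of `T(cf+dg, n)(t)` equals `(ad - bc)ⁿ` times the determinant of the matrix
stacking `T(f, n)(t)` on top of `T(g, n)(t)`. -/
theorem stmt13 (f g : ℝ → ℝ) (hf : ContDiff ℝ (⊤ : ℕ∞) f) (hg : ContDiff ℝ (⊤ : ℕ∞) g)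
    (a b c d t : ℝ) (n : ℕ) (hn : 1 ≤ n) :
    (Matrix.of fun i j : Fin (2 * n) =>
      if (i : ℕ) < n then Tentry (fun s => a * f s + b * g s) t (i : ℕ) (j : ℕ)
      else Tentry (fun s => c * f s + d * g s) t ((i : ℕ) - n) (j : ℕ)).det =
    (a * d - b * c) ^ n *
      (Matrix.of fun i j : Fin (2 * n) =>
        if (i : ℕ) < n then Tentry f t (i : ℕ) (j : ℕ)
        else Tentry g t ((i : ℕ) - n) (j : ℕ)).det := by
  have hn' : 0 < n := hn
  set M : Matrix (Fin (2 * n)) (Fin (2 * n)) ℝ := Matrix.of fun i j : Fin (2 * n) =>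
    if (i : ℕ) < n then Tentry f t (i : ℕ) (j : ℕ) else Tentry g t ((i : ℕ) - n) (j : ℕ)
    with hM
  set M' : Matrix (Fin (2 * n)) (Fin (2 * n)) ℝ := Matrix.of fun i j : Fin (2 * n) =>
    if (i : ℕ) < n then Tentry (fun s => a * f s + b * g s) t (i : ℕ) (j : ℕ)
    else Tentry (fun s => c * f s + d * g s) t ((i : ℕ) - n) (j : ℕ) with hM'
  let e : Fin 2 × Fin n ≃ Fin (2 * n) :=
  { toFun := fun p => ⟨p.1.1 * n + p.2.1, by
      have h1 := p.1.2; have h2 := p.2.2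
      calc p.1.1 * n + p.2.1 < p.1.1 * n + n := by omega
        _ ≤ 2 * n := by nlinarith⟩
    invFun := fun q => (⟨q.1 / n, by
        have := q.2
        exact (Nat.div_lt_iff_lt_mul hn').2 (by omega)⟩,
      ⟨q.1 % n, Nat.mod_lt _ hn'⟩)
    left_inv := fun p => by
      ext
      · show (p.1.1 * n + p.2.1) / n = p.1.1
        rw [mul_comm, Nat.mul_add_div hn', Nat.div_eq_of_lt p.2.2, add_zero]
      · show (p.1.1 * n + p.2.1) % n = p.2.1
        rw [mul_comm, Nat.mul_add_mod, Nat.mod_eq_of_lt p.2.2]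
    right_inv := fun q => by
      ext
      show q.1 / n * n + q.1 % n = q.1
      rw [mul_comm]; exact Nat.div_add_mod _ _ }
  let Q : Matrix (Fin 2) (Fin 2) ℝ := !![a, b; c, d]
  have key : M'.submatrix e e = (Q ⊗ₖ (1 : Matrix (Fin n) (Fin n) ℝ)) * M.submatrix e e := by
    ext ⟨k, i⟩ ⟨l, j⟩
    rw [Matrix.mul_apply]
    rw [Fintype.sum_prod_type]
    simp only [kroneckerMap_apply, Matrix.one_apply, submatrix_apply]
    have : ∀ m : Fin 2, ∑ r : Fin n, Q k m * (if i = r then (1:ℝ) else 0) * M (e (m, r)) (e (l, j))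
        = Q k m * M (e (m, i)) (e (l, j)) := by
      intro m
      rw [Finset.sum_eq_single i]
      · simp
      · intro r _ hr; simp [Ne.symm hr]
      · simp
    rw [Fin.sum_univ_two, this 0, this 1]
    have he0 : ((e (0, i)) : ℕ) = i := by show (0 * n + (i:ℕ)) = i; omega
    have he1 : ((e (1, i)) : ℕ) = n + i := by show (1 * n + (i:ℕ)) = n + i; omega
    have hMe0 : M (e (0, i)) (e (l, j)) = Tentry f t i (e (l, j)) := by
      simp only [hM, of_apply]; rw [he0, if_pos i.2]
    have hMe1 : M (e (1, i)) (e (l, j)) = Tentry g t i (e (l, j)) := by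
      simp only [hM, of_apply]
      rw [he1, if_neg (by omega : ¬ n + (i:ℕ) < n)]
      congr 1; omega
    rw [hMe0, hMe1]
    have hM'0 : M' (e (0, i)) (e (l, j))
        = a * Tentry f t i (e (l, j)) + b * Tentry g t i (e (l, j)) := by
      simp only [hM', of_apply]
      rw [he0, if_pos i.2, Tentry_lin f g hf hg]
    have hM'1 : M' (e (1, i)) (e (l, j))
        = c * Tentry f t i (e (l, j)) + d * Tentry g t i (e (l, j)) := by
      simp only [hM', of_apply]
      rw [he1, if_neg (by omega : ¬ n + (i:ℕ) < n),
        (by omega : n + (i:ℕ) - n = i), Tentry_lin f g hf hg]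
    fin_cases k
    · show M' (e (0, i)) (e (l, j))
        = Q 0 0 * Tentry f t i (e (l, j)) + Q 0 1 * Tentry g t i (e (l, j))
      rw [hM'0]; simp [Q]
    · show M' (e (1, i)) (e (l, j))
        = Q 1 0 * Tentry f t i (e (l, j)) + Q 1 1 * Tentry g t i (e (l, j))
      rw [hM'1]; simp [Q]
  have h1 : M'.det = (M'.submatrix e e).det := (Matrix.det_submatrix_equiv_self e M').symm
  have h2 : M.det = (M.submatrix e e).det := (Matrix.det_submatrix_equiv_self e M).symm
  rw [h1, key, Matrix.det_mul, Matrix.det_kronecker, ← h2]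
  simp [Q, Matrix.det_fin_two_of]


end
end

section
/- Let K ∈ ℝ and let θ : ℝ → ℝ be the constant function θ ≡ K. Then for every x ∈ ℝ and every integer n ≥ 1: 𝒮_{2n−1}^θ(x) = (4ⁿ·(4ⁿ − 1)/(2n))·|B_{2n}|·K^{n−1} and 𝒮_{2n}^θ(x) = 0, where B_{2n} denotes the 2n-th Bernoulli number. -/
noncomputable section

open MeasureTheory Filter

section Aux
open Finset PowerSeries Topology

-- parity splits
lemma sum_split_even {M : Type*} [AddCommMonoid M] (φ : ℕ → M) :
    ∀ N : ℕ, (∀ j, 2*j+1 < 2*N+1 → φ (2*j+1) = 0) →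
      ∑ i ∈ range (2*N+1), φ i = ∑ j ∈ range (N+1), φ (2*j) := by
  intro N
  induction N with
  | zero => intro _; simp
  | succ N ih =>
    intro h
    have e1 : 2*(N+1)+1 = (2*N+1)+1+1 := by omega
    rw [e1, Finset.sum_range_succ, Finset.sum_range_succ,
      ih (fun j hj => h j (by omega)), Finset.sum_range_succ (fun j => φ (2*j)) (N+1)]
    rw [h N (by omega)]
    have e2 : 2*N+1+1 = 2*(N+1) := by omega
    rw [e2]
    abel

lemma sum_split_odd {M : Type*} [AddCommMonoid M] (φ : ℕ → M) :
    ∀ N : ℕ, (∀ j, 2*j < 2*N+1 → φ (2*j) = 0) →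
      ∑ i ∈ range (2*N+1), φ i = ∑ j ∈ range N, φ (2*j+1) := by
  intro N
  induction N with
  | zero =>
    intro h
    simpa using h 0 (by omega)
  | succ N ih =>
    intro h
    have e1 : 2*(N+1)+1 = (2*N+1)+1+1 := by omega
    rw [e1, Finset.sum_range_succ, Finset.sum_range_succ,
      ih (fun j hj => h j (by omega)), Finset.sum_range_succ (fun j => φ (2*j+1)) N]
    have e2 : 2*N+1+1 = 2*(N+1) := by omega
    rw [e2, h (N+1) (by omega)]
    abel

-- the modified Bernoulli generating series  V = 2·B(X) + X  (coefficients 2·Bₙ/n! except n=1 ↦ 0)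
def Vser : ℚ⟦X⟧ := PowerSeries.mk fun n => 2 * bernoulli n / n.factorial + if n = 1 then 1 else 0

lemma Vser_eq : Vser = PowerSeries.C 2 * bernoulliPowerSeries ℚ + PowerSeries.X := by
  ext n
  simp only [Vser, coeff_mk, map_add, coeff_C_mul, bernoulliPowerSeries, coeff_X,
    Algebra.algebraMap_self, RingHom.id_apply]
  rw [mul_div_assoc]

lemma Vser_mul : Vser * (exp ℚ - 1) = X * (exp ℚ + 1) := by
  have hB := bernoulliPowerSeries_mul_exp_sub_one ℚ
  have h2 : (PowerSeries.C) (2:ℚ) = (2 : ℚ⟦X⟧) := by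
    exact map_ofNat _ 2
  rw [Vser_eq, h2]
  linear_combination (2 : ℚ⟦X⟧) * hB

lemma rescale_Vser_mul (c : ℕ) :
    rescale (c:ℚ) Vser * (exp ℚ ^ c - 1) = (c:ℚ⟦X⟧) * X * (exp ℚ ^ c + 1) := by
  have h := congrArg (rescale (c:ℚ)) Vser_mul
  rw [map_mul, map_mul, map_sub, map_add, rescale_X, map_one,
    ← exp_pow_eq_rescale_exp] at h
  rw [h]
  have : (PowerSeries.C) ((c:ℕ):ℚ) = ((c:ℕ) : ℚ⟦X⟧) := by
    exact map_natCast _ c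
  rw [this]

lemma exp_pow_sub_one_ne (c : ℕ) (hc : c ≠ 0) : exp ℚ ^ c - 1 ≠ 0 := by
  intro h
  have h1 := congrArg (coeff 1) h
  rw [map_sub, exp_pow_eq_rescale_exp, coeff_rescale, coeff_exp] at h1
  simp [Nat.factorial] at h1
  exact hc h1

lemma main_identity :
    (rescale (4:ℚ) Vser - rescale (2:ℚ) Vser) * (exp ℚ + evalNegHom (exp ℚ)) =
      2 * X * (exp ℚ - evalNegHom (exp ℚ)) := by
  have hU : exp ℚ * evalNegHom (exp ℚ) = 1 := exp_mul_exp_neg_eq_one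
  have h2 := rescale_Vser_mul 2
  have h4 := rescale_Vser_mul 4
  push_cast at h2 h4
  set E := exp ℚ
  set U := evalNegHom (exp ℚ)
  apply mul_right_cancel₀ (b := (E^2 - 1) * (E^4 - 1))
    (mul_ne_zero (exp_pow_sub_one_ne 2 (by norm_num)) (exp_pow_sub_one_ne 4 (by norm_num)))
  linear_combination ((E+U)*(E^2-1))*h4 - ((E+U)*(E^4-1))*h2 + (4*X*E*(E^2-1)^2)*hU

lemma key (m : ℕ) :
    ∑ j ∈ range (m+2), ((16:ℚ)^j - 4^j) * (2 * bernoulli (2*j) / (2*j).factorial) *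
      (2 / (2*(m+1-j)).factorial) = 4 / (2*m+1).factorial := by
  have hM := congrArg (coeff (2*m+2)) main_identity
  -- RHS
  have hr : (2 : ℚ⟦X⟧) * X * (exp ℚ - evalNegHom (exp ℚ))
      = X * (2 * (exp ℚ - evalNegHom (exp ℚ))) := by ring
  rw [hr, show 2*m+2 = (2*m+1)+1 by omega, coeff_succ_X_mul] at hM
  have h2C : (2 : ℚ⟦X⟧) = PowerSeries.C 2 := (map_ofNat _ 2).symm
  rw [h2C, coeff_C_mul, map_sub, coeff_exp] at hM
  have hU1 : coeff (2*m+1) (evalNegHom (exp ℚ)) = (-1)^(2*m+1) * (1/(2*m+1).factorial) := by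
    rw [PowerSeries.evalNegHom, coeff_rescale, coeff_exp]
    simp
  rw [hU1] at hM
  have hodd : ((-1:ℚ))^(2*m+1) = -1 := Odd.neg_one_pow ⟨m, by omega⟩
  rw [hodd] at hM
  simp only [Algebra.algebraMap_self, RingHom.id_apply] at hM
  -- LHS
  rw [show (2*m+1)+1 = 2*m+2 by omega, coeff_mul,
    Finset.Nat.sum_antidiagonal_eq_sum_range_succ_mk] at hM
  have hterm : ∀ i ∈ range (2*m+2+1),
      coeff (i, 2*m+2-i).1 (rescale (4:ℚ) Vser - rescale (2:ℚ) Vser) *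
        coeff (i, 2*m+2-i).2 (exp ℚ + evalNegHom (exp ℚ))
      = ((4:ℚ)^i - 2^i) * (2 * bernoulli i / i.factorial + if i = 1 then 1 else 0) *
          ((1 + (-1)^(2*m+2-i)) * (1/(2*m+2-i).factorial)) := by
    intro i _
    rw [map_sub, coeff_rescale, coeff_rescale, map_add, coeff_exp]
    rw [show (evalNegHom : ℚ⟦X⟧ →+* ℚ⟦X⟧) = rescale (-1) from rfl, coeff_rescale, coeff_exp]
    simp only [Vser, coeff_mk, Algebra.algebraMap_self, RingHom.id_apply]
    ring
  rw [Finset.sum_congr rfl hterm] at hM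
  rw [show 2*m+2+1 = 2*(m+1)+1 by omega] at hM
  rw [sum_split_even _ (m+1) (by
    intro j hj
    have he : 2*m+2-(2*j+1) = 2*(m-j)+1 := by omega
    rw [he, Odd.neg_one_pow ⟨m-j, by omega⟩]
    ring)] at hM
  have hterm2 : ∀ j ∈ range (m+1+1),
      ((4:ℚ)^(2*j) - 2^(2*j)) * (2 * bernoulli (2*j) / (2*j).factorial + if 2*j = 1 then 1 else 0) *
          ((1 + (-1)^(2*m+2-2*j)) * (1/(2*m+2-2*j).factorial))
      = ((16:ℚ)^j - 4^j) * (2 * bernoulli (2*j) / (2*j).factorial) * (2 / (2*(m+1-j)).factorial) := by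
    intro j hj
    rw [mem_range] at hj
    have h16 : (4:ℚ)^(2*j) = 16^j := by rw [pow_mul]; norm_num
    have h4 : (2:ℚ)^(2*j) = 4^j := by rw [pow_mul]; norm_num
    have he : 2*m+2-2*j = 2*(m+1-j) := by omega
    have hev : ((-1:ℚ))^(2*(m+1-j)) = 1 := Even.neg_one_pow ⟨m+1-j, by omega⟩
    rw [h16, h4, he, hev, if_neg (by omega)]
    ring
  rw [Finset.sum_congr rfl hterm2] at hM
  rw [hM]
  ring

theorem QF (m : ℕ) :
    ∑ j ∈ range (m+1), (4:ℚ)^(j+1) * ((4:ℚ)^(j+1) - 1) / (2*(j+1)) * bernoulli (2*(j+1)) *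
      ((2*m+1).choose (2*j+1) : ℚ) = 1 := by
  have hk := key m
  rw [Finset.sum_range_succ'] at hk
  simp only [pow_zero, sub_self, zero_mul, mul_zero, zero_mul, add_zero] at hk
  have hfac : ((2*m+1).factorial : ℚ) ≠ 0 := Nat.cast_ne_zero.mpr (Nat.factorial_ne_zero _)
  have hterm : ∀ j ∈ range (m+1),
      (4:ℚ)^(j+1) * ((4:ℚ)^(j+1) - 1) / (2*(j+1)) * bernoulli (2*(j+1)) *
        ((2*m+1).choose (2*j+1) : ℚ)
      = ((2*m+1).factorial : ℚ) / 4 *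
        (((16:ℚ)^(j+1) - 4^(j+1)) * (2 * bernoulli (2*(j+1)) / (2*(j+1)).factorial) *
          (2 / (2*(m+1-(j+1))).factorial)) := by
    intro j hj
    rw [mem_range] at hj
    have hch : (((2*m+1).choose (2*j+1) : ℕ) : ℚ)
        = ((2*m+1).factorial : ℚ) / ((2*j+1).factorial * (2*(m-j)).factorial) := by
      rw [Nat.cast_choose ℚ (by omega : 2*j+1 ≤ 2*m+1),
        show (2*m+1) - (2*j+1) = 2*(m-j) from by omega]
    have he1 : m+1-(j+1) = m-j := by omega
    have hfs : (2*(j+1)).factorial = (2*(j+1)) * (2*j+1).factorial := by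
      rw [show 2*(j+1) = (2*j+1)+1 by omega, Nat.factorial_succ]
    have h16 : (16:ℚ)^(j+1) = 4^(j+1) * 4^(j+1) := by rw [← mul_pow]; norm_num
    rw [hch, he1, hfs, h16]
    have hne1 : ((2*j+1).factorial : ℚ) ≠ 0 := Nat.cast_ne_zero.mpr (Nat.factorial_ne_zero _)
    have hne2 : ((2*(m-j)).factorial : ℚ) ≠ 0 := Nat.cast_ne_zero.mpr (Nat.factorial_ne_zero _)
    have hne3 : ((2*(j+1) : ℕ) : ℚ) ≠ 0 := by positivity
    push_cast
    field_simp
    ring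
  rw [Finset.sum_congr rfl hterm, ← Finset.mul_sum, hk]
  field_simp

lemma bernoulli_abs (j : ℕ) (hj : 1 ≤ j) :
    |((bernoulli (2*j) : ℚ) : ℝ)| = (-1:ℝ)^(j+1) * ((bernoulli (2*j) : ℚ) : ℝ) := by
  have hs := hasSum_zeta_nat (k := j) (by omega)
  have hnn : (0:ℝ) ≤ (-1 : ℝ) ^ (j + 1) * (2 : ℝ) ^ (2 * j - 1) * Real.pi ^ (2 * j) *
      ((bernoulli (2 * j) : ℚ) : ℝ) / (2 * j).factorial :=
    hs.nonneg (fun n => by positivity)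
  have hpos : (0:ℝ) < (2 : ℝ) ^ (2 * j - 1) * Real.pi ^ (2 * j) / (2 * j).factorial := by
    have := Real.pi_pos
    positivity
  have hre : (-1 : ℝ) ^ (j + 1) * (2 : ℝ) ^ (2 * j - 1) * Real.pi ^ (2 * j) *
      ((bernoulli (2 * j) : ℚ) : ℝ) / (2 * j).factorial
      = ((-1:ℝ)^(j+1) * ((bernoulli (2*j) : ℚ) : ℝ)) *
        ((2 : ℝ) ^ (2 * j - 1) * Real.pi ^ (2 * j) / (2 * j).factorial) := by ring
  rw [hre] at hnn
  have hb : (0:ℝ) ≤ (-1:ℝ)^(j+1) * ((bernoulli (2*j) : ℚ) : ℝ) :=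
    nonneg_of_mul_nonneg_right (by linarith [hnn] : (0:ℝ) ≤ (2 : ℝ) ^ (2 * j - 1) * Real.pi ^ (2 * j) / (2 * j).factorial * ((-1:ℝ)^(j+1) * ((bernoulli (2*j) : ℚ) : ℝ))) hpos
  calc |((bernoulli (2*j) : ℚ) : ℝ)| = |(-1:ℝ)^(j+1) * ((bernoulli (2*j) : ℚ) : ℝ)| := by
        rw [abs_mul, abs_pow, abs_neg, abs_one, one_pow, one_mul]
    _ = _ := abs_of_nonneg hb

lemma pascal_sum (F G : ℕ → ℝ) (n : ℕ) :
    ∑ k ∈ range (n+1), (n.choose k : ℝ) * (F (k+1) * G (n-k))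
    + ∑ k ∈ range (n+1), (n.choose k : ℝ) * (F k * G (n+1-k))
    = ∑ k ∈ range (n+2), ((n+1).choose k : ℝ) * (F k * G (n+1-k)) := by
  conv_rhs => rw [Finset.sum_range_succ']
  have e1 : ∀ k ∈ range (n+1), ((n+1).choose (k+1) : ℝ) * (F (k+1) * G (n+1-(k+1)))
      = (n.choose k : ℝ) * (F (k+1) * G (n-k)) + (n.choose (k+1) : ℝ) * (F (k+1) * G (n-k)) := by
    intro k hk
    rw [Nat.choose_succ_succ, Nat.cast_add, show n+1-(k+1) = n-k from by omega]
    ring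
  rw [Finset.sum_congr rfl e1, Finset.sum_add_distrib]
  have e2 : ∑ k ∈ range (n+1), (n.choose k : ℝ) * (F k * G (n+1-k))
      = ∑ k ∈ range (n+1), (n.choose (k+1) : ℝ) * (F (k+1) * G (n-k))
        + ((n+1).choose 0 : ℝ) * (F 0 * G (n+1-0)) := by
    rw [Finset.sum_range_succ' (fun k => (n.choose k : ℝ) * (F k * G (n+1-k))) n]
    rw [Finset.sum_range_succ (fun k => (n.choose (k+1):ℝ) * (F (k+1) * G (n-k))) n]
    simp only [Nat.choose_succ_self, Nat.cast_zero, zero_mul, add_zero, Nat.choose_zero_right,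
      Nat.cast_one, Nat.sub_zero, Nat.succ_sub_succ_eq_sub]
  rw [e2]
  ring

lemma my_iteratedDeriv_mul {f g : ℝ → ℝ} (hf : ContDiff ℝ (⊤:ℕ∞) f) (hg : ContDiff ℝ (⊤:ℕ∞) g) :
    ∀ n : ℕ, iteratedDeriv n (fun t => f t * g t) = fun y =>
      ∑ k ∈ range (n+1), (n.choose k : ℝ) * (iteratedDeriv k f y * iteratedDeriv (n-k) g y) := by
  have hlt : ∀ m : ℕ, (m : WithTop ℕ∞) < ((⊤:ℕ∞) : WithTop ℕ∞) := by
    intro m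
    exact_mod_cast WithTop.coe_lt_coe.mpr (WithTop.coe_lt_top m)
  have hdF : ∀ {u : ℝ → ℝ}, ContDiff ℝ (⊤:ℕ∞) u → ∀ (k : ℕ) (y : ℝ),
      DifferentiableAt ℝ (iteratedDeriv k u) y := fun h k y =>
    (h.differentiable_iteratedDeriv k (hlt k)).differentiableAt
  intro n
  induction n with
  | zero => funext y; simp
  | succ n ih =>
    funext y
    rw [iteratedDeriv_succ, ih]
    rw [deriv_fun_sum (fun k hk => by
      exact (((hdF hf k y).mul (hdF hg (n-k) y)).const_mul _))]
    have step : ∀ k ∈ range (n+1),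
        deriv (fun y => (n.choose k : ℝ) * (iteratedDeriv k f y * iteratedDeriv (n-k) g y)) y
        = (n.choose k : ℝ) * (iteratedDeriv (k+1) f y * iteratedDeriv (n-k) g y)
          + (n.choose k : ℝ) * (iteratedDeriv k f y * iteratedDeriv (n+1-k) g y) := by
      intro k hk
      rw [mem_range] at hk
      rw [deriv_const_mul_field, deriv_fun_mul (hdF hf k y) (hdF hg (n-k) y)]
      rw [← iteratedDeriv_succ, ← iteratedDeriv_succ]
      rw [show n - k + 1 = n + 1 - k from by omega]
      ring
    rw [Finset.sum_congr rfl step, Finset.sum_add_distrib]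
    exact pascal_sum (fun k => iteratedDeriv k f y) (fun k => iteratedDeriv k g y) n
lemma iteratedDeriv_cmul (c : ℝ) (f : ℝ → ℝ) :
    ∀ n : ℕ, iteratedDeriv n (fun t => c * f t) = fun y => c * iteratedDeriv n f y := by
  intro n
  induction n with
  | zero => funext y; simp
  | succ n ih =>
    funext y
    rw [iteratedDeriv_succ, ih, iteratedDeriv_succ]
    exact deriv_const_mul_field c

lemma sol_deriv_rec {f : ℝ → ℝ} (K : ℝ)
    (hode : ∀ t, deriv (deriv f) t + K * f t = 0) (n : ℕ) :
    iteratedDeriv (n+2) f = fun t => -K * iteratedDeriv n f t := by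
  have h2 : deriv (deriv f) = fun t => -K * f t := funext fun t => by linarith [hode t]
  calc iteratedDeriv (n+2) f = iteratedDeriv (n+1) (deriv f) := by
        rw [show n+2 = (n+1)+1 from rfl, iteratedDeriv_succ']
    _ = iteratedDeriv n (deriv (deriv f)) := by rw [iteratedDeriv_succ']
    _ = iteratedDeriv n (fun t => -K * f t) := by rw [h2]
    _ = _ := iteratedDeriv_cmul _ _ n

lemma sol_vals {f : ℝ → ℝ} (K x v0 v1 : ℝ)
    (hode : ∀ t, deriv (deriv f) t + K * f t = 0) (h0 : f x = v0) (h1 : deriv f x = v1) :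
    ∀ m : ℕ, iteratedDeriv (2*m) f x = (-K)^m * v0 ∧ iteratedDeriv (2*m+1) f x = (-K)^m * v1 := by
  intro m
  induction m with
  | zero => simpa [iteratedDeriv_one] using ⟨h0, h1⟩
  | succ m ih =>
    constructor
    · rw [show 2*(m+1) = (2*m)+2 from by omega, sol_deriv_rec K hode]
      show -K * iteratedDeriv (2*m) f x = _
      rw [ih.1]; ring
    · rw [show 2*(m+1)+1 = (2*m+1)+2 from by omega, sol_deriv_rec K hode]
      show -K * iteratedDeriv (2*m+1) f x = _
      rw [ih.2]; ring

/-- For the constant function `θ ≡ K`, for every `x` and `n ≥ 1`: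
`𝒮_{2n-1}^θ(x) = (4ⁿ(4ⁿ-1)/(2n))·|B_{2n}|·K^(n-1)` and `𝒮_{2n}^θ(x) = 0`. -/
theorem stmt14 (K : ℝ) (x : ℝ) (f₁ f₂ : ℝ → ℝ)
    (hf : IsFundPair (fun _ => K) x f₁ f₂) :
    ∀ n : ℕ, 1 ≤ n →
      iteratedDeriv (2 * n - 1) (fun t => f₂ t / f₁ t) x =
        ((4 : ℝ) ^ n * ((4 : ℝ) ^ n - 1) / (2 * n)) *
          |((bernoulli (2 * n) : ℚ) : ℝ)| * K ^ (n - 1) ∧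
      iteratedDeriv (2 * n) (fun t => f₂ t / f₁ t) x = 0 := by
  obtain ⟨⟨hs₁, hode₁⟩, ⟨hs₂, hode₂⟩, h10, h11, h20, h21⟩ := hf
  have hode₁' : ∀ t, deriv (deriv f₁) t + K * f₁ t = 0 := fun t => by simpa using hode₁ t
  have hode₂' : ∀ t, deriv (deriv f₂) t + K * f₂ t = 0 := fun t => by simpa using hode₂ t
  -- neighborhood where f₁ ≠ 0
  have hUopen : IsOpen {t : ℝ | f₁ t ≠ 0} := isOpen_ne.preimage hs₁.continuous
  have hxU : x ∈ {t : ℝ | f₁ t ≠ 0} := by simp [h10]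
  obtain ⟨ε, hε, hball⟩ := Metric.isOpen_iff.mp hUopen x hxU
  -- bump function and the globally smooth surrogate H for f₂/f₁
  let c : ContDiffBump x := ⟨ε/2, 3*ε/4, by positivity, by linarith⟩
  set H : ℝ → ℝ := fun t => c t * (f₂ t / f₁ t) with hHdef
  have hH : ContDiff ℝ (⊤:ℕ∞) H := by
    rw [contDiff_iff_contDiffAt]
    intro y
    by_cases hy : f₁ y ≠ 0
    · exact c.contDiff.contDiffAt.mul ((hs₂.contDiffAt).div (hs₁.contDiffAt) hy)
    · push_neg at hy
      have hyn : y ∉ tsupport (c : ℝ → ℝ) := by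
        rw [c.tsupport_eq]
        intro hmem
        have : y ∈ Metric.ball x ε := by
          have h' := Metric.mem_closedBall.mp hmem
          rw [show c.rOut = 3*ε/4 from rfl] at h'
          exact Metric.mem_ball.mpr (by linarith)
        exact hball this hy
      have hev : H =ᶠ[𝓝 y] fun _ => 0 := by
        filter_upwards [(isClosed_tsupport (c : ℝ → ℝ)).isOpen_compl.mem_nhds hyn] with t ht
        simp [hHdef, image_eq_zero_of_notMem_tsupport ht]
      exact contDiffAt_const.congr_of_eventuallyEq hev
  have hHh : H =ᶠ[𝓝 x] fun t => f₂ t / f₁ t := by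
    filter_upwards [c.eventuallyEq_one] with t ht
    simp [hHdef, ht]
  have hf2H : f₂ =ᶠ[𝓝 x] fun t => H t * f₁ t := by
    filter_upwards [hHh, hUopen.mem_nhds hxU] with t h1 h2
    rw [h1]
    rw [div_mul_cancel₀ _ h2]
  -- the recursion
  set A : ℕ → ℝ := fun k => iteratedDeriv k H x with hAdef
  have hrec : ∀ n : ℕ, iteratedDeriv n f₂ x =
      ∑ k ∈ range (n+1), (n.choose k : ℝ) * (A k * iteratedDeriv (n-k) f₁ x) := by
    intro n
    rw [hf2H.iteratedDeriv_eq n]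
    exact congrFun (my_iteratedDeriv_mul hH hs₁ n) x
  have v1 := sol_vals K x 1 0 hode₁' h10 h11
  have v2 := sol_vals K x 0 1 hode₂' h20 h21
  have hrec' : ∀ n : ℕ, A (n+1) = iteratedDeriv (n+1) f₂ x -
      ∑ k ∈ range (n+1), ((n+1).choose k : ℝ) * (A k * iteratedDeriv (n+1-k) f₁ x) := by
    intro n
    have h := hrec (n+1)
    rw [Finset.sum_range_succ] at h
    simp only [Nat.choose_self, Nat.cast_one, Nat.sub_self, iteratedDeriv_zero, h10, mul_one,
      one_mul] at h
    linarith [h]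
  set TR : ℕ → ℝ := fun j => (4:ℝ)^j * ((4:ℝ)^j - 1) / (2*(j:ℝ)) *
    |((bernoulli (2*j) : ℚ) : ℝ)| with hTRdef
  have hTReq : ∀ j : ℕ, 1 ≤ j → TR j = (-1:ℝ)^(j+1) *
      ((4:ℝ)^j * ((4:ℝ)^j - 1) / (2*(j:ℝ)) * ((bernoulli (2*j):ℚ):ℝ)) := by
    intro j hj
    rw [hTRdef]
    simp only []
    rw [bernoulli_abs j hj]
    ring
  have hQR : ∀ m : ℕ, ∑ j ∈ range (m+1), (4:ℝ)^(j+1) * ((4:ℝ)^(j+1) - 1) / (2*((j:ℝ)+1)) *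
      ((bernoulli (2*(j+1)) : ℚ):ℝ) * (((2*m+1).choose (2*j+1) : ℕ):ℝ) = 1 := by
    intro m
    have hq := congrArg (fun q : ℚ => (q : ℝ)) (QF m)
    push_cast at hq
    convert hq using 2
  have main : ∀ m : ℕ, A (2*m) = 0 ∧ A (2*m+1) = TR (m+1) * K^m := by
    intro m
    induction m using Nat.strong_induction_on with
    | _ m IH =>
    have part1 : A (2*m) = 0 := by
      match m with
      | 0 =>
        show iteratedDeriv 0 H x = 0
        rw [iteratedDeriv_zero]
        have hx0 : H x = f₂ x / f₁ x := hHh.eq_of_nhds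
        rw [hx0, h20]
        simp
      | (p+1) =>
        have h := hrec' (2*p+1)
        rw [show (2*p+1)+1 = 2*(p+1) from by omega] at h
        rw [h]
        have hz : ∀ k ∈ range (2*(p+1)),
            ((2*(p+1)).choose k : ℝ) * (A k * iteratedDeriv (2*(p+1)-k) f₁ x) = 0 := by
          intro k hk
          rw [mem_range] at hk
          rcases Nat.even_or_odd k with ⟨j, hj⟩ | ⟨j, hj⟩
          · have hA : A k = 0 := by
              rw [show k = 2*j from by omega]
              exact (IH j (by omega)).1
            rw [hA]
            ring
          · have he : 2*(p+1)-k = 2*(p-j)+1 := by omega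
            rw [he, (v1 (p-j)).2]
            ring
        rw [Finset.sum_eq_zero hz, (v2 (p+1)).1]
        ring
    refine ⟨part1, ?_⟩
    have h := hrec' (2*m)
    rw [sum_split_odd (fun k => ((2*m+1).choose k : ℝ) *
      (A k * iteratedDeriv (2*m+1-k) f₁ x)) m (by
        intro j hj
        have hA : A (2*j) = 0 := by
          rcases Nat.lt_or_ge j m with hlt | hge
          · exact (IH j hlt).1
          · rw [show j = m from by omega]
            exact part1
        simp [hA])] at h
    rw [(v2 m).2] at h
    have hterm : ∀ j ∈ range m,
        ((2*m+1).choose (2*j+1) : ℝ) * (A (2*j+1) * iteratedDeriv (2*m+1-(2*j+1)) f₁ x)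
        = (-1:ℝ)^m * K^m * ((4:ℝ)^(j+1) * ((4:ℝ)^(j+1) - 1) / (2*((j:ℝ)+1)) *
            ((bernoulli (2*(j+1)) : ℚ):ℝ) * (((2*m+1).choose (2*j+1) : ℕ):ℝ)) := by
      intro j hj
      rw [mem_range] at hj
      rw [(IH j hj).2, show 2*m+1-(2*j+1) = 2*(m-j) from by omega, (v1 (m-j)).1,
        hTReq (j+1) (by omega)]
      push_cast
      have h2 : (K:ℝ)^j * K^(m-j) = K^m := by
        rw [← pow_add]
        congr 1
        omega
      have h3 : ((-1:ℝ))^(j+1+1) * (-1)^(m-j) = (-1)^m := by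
        rw [← pow_add, show j+1+1+(m-j) = m+2 from by omega, pow_add]
        norm_num
      have h4 : (-K:ℝ)^(m-j) = (-1)^(m-j) * K^(m-j) := by rw [neg_pow]
      set s : ℝ := (4:ℝ)^(j+1) * ((4:ℝ)^(j+1) - 1) / (2*((j:ℝ)+1)) *
        ((bernoulli (2*(j+1)) : ℚ):ℝ) with hsdef
      set cc : ℝ := (((2*m+1).choose (2*j+1) : ℕ):ℝ) with hccdef
      rw [h4]
      linear_combination (cc * s * ((-1:ℝ))^(j+1+1) * (-1:ℝ)^(m-j)) * h2 + (cc * s * K^m) * h3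
    rw [Finset.sum_congr rfl hterm, ← Finset.mul_sum] at h
    have hQ := hQR m
    rw [Finset.sum_range_succ, Nat.choose_self] at hQ
    push_cast at hQ
    rw [h, hTReq (m+1) (by omega), neg_pow]
    push_cast
    linear_combination (-(-1:ℝ)^m * K^m) * hQ
  intro n hn
  constructor
  · have hd : iteratedDeriv (2*n-1) (fun t => f₂ t / f₁ t) x = A (2*n-1) :=
      (hHh.iteratedDeriv_eq (2*n-1)).symm
    rw [hd, show 2*n-1 = 2*(n-1)+1 from by omega, (main (n-1)).2,
      show n-1+1 = n from by omega, hTRdef]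
  · have hd : iteratedDeriv (2*n) (fun t => f₂ t / f₁ t) x = A (2*n) :=
      (hHh.iteratedDeriv_eq (2*n)).symm
    rw [hd]
    exact (main n).1


end Aux

end
end
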